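/- arXiv:1706.06017 — 4 statements merged into one kernel-verified Lean document; each statement's English description precedes it below -/
import Mathlib

section
/- Let 1 ≤ p < q < ∞ with 1/r = 1/p − 1/q, let X be a Banach function lattice on a σ-finite measure space, E a Banach space, and T : X → E a bounded linear operator. Then: (a) if T is p-summing (there is C > 0 with (∑_{k=1}^n ‖T x_k‖_E^p)^{1/p} ≤ C sup_{x*∈B_{X*}} (∑_{k=1}^n |⟨x_k, x*⟩|^p)^{1/p} for all finite sequences), then T is p-strongly q-concave; (b) if T is p-strongly q-concave with constant C, then T is q-concave with constant C, i.e., (∑_{k=1}^n ‖T x_k‖_E^q)^{1/q} ≤ C ‖(∑_{k=1}^n |x_k|^q)^{1/q}‖_X for all finite sequences (x_k) in X. -/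
open MeasureTheory Filter

noncomputable section

section Preamble

variable {Ω : Type} [MeasurableSpace Ω] {μ : Measure Ω}

/-- The a.e.-class of `ω ↦ |f ω| ^ e` (real power). -/
def rpowAbs (e : ℝ) (f : Ω →ₘ[μ] ℝ) : Ω →ₘ[μ] ℝ :=
  AEEqFun.mk (fun ω => |f ω| ^ e)
    (((measurable_abs.comp_aemeasurable f.aestronglyMeasurable.aemeasurable).pow
        aemeasurable_const).aestronglyMeasurable)

/-- The a.e.-class of `ω ↦ (∑ k, |x k ω| ^ p) ^ (1/p)`. -/
def pSum (p : ℝ) {n : ℕ} (x : Fin n → (Ω →ₘ[μ] ℝ)) : Ω →ₘ[μ] ℝ :=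
  AEEqFun.mk (fun ω => (∑ k, |x k ω| ^ p) ^ p⁻¹)
    (((Finset.aemeasurable_fun_sum Finset.univ fun k _ =>
        ((measurable_abs.comp_aemeasurable (x k).aestronglyMeasurable.aemeasurable).pow
          aemeasurable_const)).pow
      aemeasurable_const).aestronglyMeasurable)

/-- A Banach function lattice on a measure space `(Ω, μ)`: an order ideal of `L⁰(μ)`
equipped with a complete lattice norm. -/
structure BFL (Ω : Type) [MeasurableSpace Ω] (μ : Measure Ω) where
  mem : (Ω →ₘ[μ] ℝ) → Prop
  nrm : (Ω →ₘ[μ] ℝ) → ℝ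
  zero_mem : mem 0
  add_mem : ∀ f g, mem f → mem g → mem (f + g)
  smul_mem : ∀ (c : ℝ) f, mem f → mem (c • f)
  ideal : ∀ f g, mem g → |f| ≤ |g| → mem f
  nrm_nonneg : ∀ f, 0 ≤ nrm f
  nrm_eq_zero : ∀ f, mem f → nrm f = 0 → f = 0
  nrm_triangle : ∀ f g, mem f → mem g → nrm (f + g) ≤ nrm f + nrm g
  nrm_smul : ∀ (c : ℝ) f, mem f → nrm (c • f) = |c| * nrm f
  nrm_mono : ∀ f g, mem g → |f| ≤ |g| → nrm f ≤ nrm g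
  complete : ∀ u : ℕ → (Ω →ₘ[μ] ℝ), (∀ n, mem (u n)) →
    (∀ ε : ℝ, 0 < ε → ∃ N, ∀ m ≥ N, ∀ k ≥ N, nrm (u m - u k) < ε) →
    ∃ f, mem f ∧ Tendsto (fun n => nrm (u n - f)) atTop (nhds 0)

/-- `p`-convexity with constant `C`. -/
def BFL.pConvex (X : BFL Ω μ) (p C : ℝ) : Prop :=
  ∀ (n : ℕ) (x : Fin n → (Ω →ₘ[μ] ℝ)), (∀ k, X.mem (x k)) →
    X.mem (pSum p x) ∧ X.nrm (pSum p x) ≤ C * (∑ k, X.nrm (x k) ^ p) ^ p⁻¹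

/-- `p`-concavity with constant `C`. -/
def BFL.pConcave (X : BFL Ω μ) (p C : ℝ) : Prop :=
  ∀ (n : ℕ) (x : Fin n → (Ω →ₘ[μ] ℝ)), (∀ k, X.mem (x k)) →
    (∑ k, X.nrm (x k) ^ p) ^ p⁻¹ ≤ C * X.nrm (pSum p x)

/-- Order continuity of a function norm: decreasing sequences with infimum `0`
have norms tending to `0`. -/
def OrderContOn (mem : (Ω →ₘ[μ] ℝ) → Prop) (nrm : (Ω →ₘ[μ] ℝ) → ℝ) : Prop :=
  ∀ f : ℕ → (Ω →ₘ[μ] ℝ), (∀ n, mem (f n)) → (∀ n, f (n + 1) ≤ f n) → (∀ n, 0 ≤ f n) →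
    (∀ g, (∀ n, g ≤ f n) → g ≤ 0) → Tendsto (fun n => nrm (f n)) atTop (nhds 0)

/-- Order continuity of a Banach function lattice. -/
def BFL.OrderCont (X : BFL Ω μ) : Prop := OrderContOn X.mem X.nrm

/-- The Fatou property. -/
def BFL.Fatou (X : BFL Ω μ) : Prop :=
  ∀ (f : ℕ → (Ω →ₘ[μ] ℝ)) (g : Ω →ₘ[μ] ℝ), (∀ n, X.mem (f n)) → (∀ n, 0 ≤ f n) →
    Monotone f → (∀ n, f n ≤ g) → (∀ h, (∀ n, f n ≤ h) → g ≤ h) →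
    BddAbove (Set.range fun n => X.nrm (f n)) →
    X.mem g ∧ Tendsto (fun n => X.nrm (f n)) atTop (nhds (X.nrm g))

/-- The closed unit ball `B_r^n` of `ℓ_r^n` where `1/r = 1/p - 1/q` (`r = ∞` when `p = q`). -/
def strongBall (p q : ℝ) (n : ℕ) : Set (Fin n → ℝ) :=
  {β | if p = q then ∀ k, |β k| ≤ 1 else ∑ k, |β k| ^ (1 / p - 1 / q)⁻¹ ≤ 1}

/-- `sup_{β ∈ B_r^n} ‖(∑_k |β_k x_k|^p)^{1/p}‖`, where `1/r = 1/p - 1/q`. -/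
def strongSup (nrm : (Ω →ₘ[μ] ℝ) → ℝ) (p q : ℝ) {n : ℕ} (x : Fin n → (Ω →ₘ[μ] ℝ)) : ℝ :=
  ⨆ β : strongBall p q n, nrm (pSum p fun k => β.1 k • x k)

/-- Membership in the `p`-concavification: `f ∈ X_p ↔ |f|^{1/p} ∈ X`. -/
def cMem (mem : (Ω →ₘ[μ] ℝ) → Prop) (p : ℝ) (f : Ω →ₘ[μ] ℝ) : Prop := mem (rpowAbs p⁻¹ f)

/-- The norm of the `p`-concavification: `‖f‖_{X_p} = ‖|f|^{1/p}‖_X ^ p`. -/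
def cNrm (nrm : (Ω →ₘ[μ] ℝ) → ℝ) (p : ℝ) (f : Ω →ₘ[μ] ℝ) : ℝ := nrm (rpowAbs p⁻¹ f) ^ p

/-- The positive part of the closed dual unit ball of a function norm: positive functionals
of norm at most one, as bare functions on `L⁰`. -/
def dualBallPos (mem : (Ω →ₘ[μ] ℝ) → Prop) (nrm : (Ω →ₘ[μ] ℝ) → ℝ) :
    Set ((Ω →ₘ[μ] ℝ) → ℝ) :=
  {φ | (∀ f g, mem f → mem g → φ (f + g) = φ f + φ g) ∧
       (∀ (c : ℝ) f, mem f → φ (c • f) = c * φ f) ∧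
       (∀ f, mem f → 0 ≤ f → 0 ≤ φ f) ∧
       (∀ f, mem f → |φ f| ≤ nrm f)}

/-- The closed dual unit ball of a function norm. -/
def dualBall (mem : (Ω →ₘ[μ] ℝ) → Prop) (nrm : (Ω →ₘ[μ] ℝ) → ℝ) :
    Set ((Ω →ₘ[μ] ℝ) → ℝ) :=
  {φ | (∀ f g, mem f → mem g → φ (f + g) = φ f + φ g) ∧
       (∀ (c : ℝ) f, mem f → φ (c • f) = c * φ f) ∧
       (∀ f, mem f → |φ f| ≤ nrm f)}

/-- The positive part of the dual unit ball, as a type carrying the weak* (pointwise)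
topology and its Borel σ-algebra. -/
def DualPos (mem : (Ω →ₘ[μ] ℝ) → Prop) (nrm : (Ω →ₘ[μ] ℝ) → ℝ) : Type _ :=
  ↥(dualBallPos mem nrm)

instance {mem : (Ω →ₘ[μ] ℝ) → Prop} {nrm : (Ω →ₘ[μ] ℝ) → ℝ} :
    TopologicalSpace (DualPos (μ := μ) mem nrm) :=
  inferInstanceAs (TopologicalSpace ↥(dualBallPos mem nrm))

instance {mem : (Ω →ₘ[μ] ℝ) → Prop} {nrm : (Ω →ₘ[μ] ℝ) → ℝ} :
    MeasurableSpace (DualPos (μ := μ) mem nrm) := borel _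

instance {mem : (Ω →ₘ[μ] ℝ) → Prop} {nrm : (Ω →ₘ[μ] ℝ) → ℝ} :
    BorelSpace (DualPos (μ := μ) mem nrm) := ⟨rfl⟩

/-- Evaluation of a functional in the dual ball. -/
def DualPos.app {mem : (Ω →ₘ[μ] ℝ) → Prop} {nrm : (Ω →ₘ[μ] ℝ) → ℝ}
    (φ : DualPos (μ := μ) mem nrm) (f : Ω →ₘ[μ] ℝ) : ℝ :=
  Subtype.val φ f

/-- The seminorm `‖f‖_{p,q,ν} = (∫ ⟨|f|^p, φ⟩^{q/p} dν(φ))^{1/q}`. -/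
def pqNrm {mem : (Ω →ₘ[μ] ℝ) → Prop} {nrm : (Ω →ₘ[μ] ℝ) → ℝ} (p q : ℝ)
    (ν : Measure (DualPos (μ := μ) mem nrm)) (f : Ω →ₘ[μ] ℝ) : ℝ :=
  (∫ φ, (DualPos.app φ (rpowAbs p f)) ^ (q / p) ∂ν) ^ q⁻¹

/-- Membership in the Köthe dual of a function space. -/
def kMem (mem : (Ω →ₘ[μ] ℝ) → Prop) (h : Ω →ₘ[μ] ℝ) : Prop :=
  ∀ f, mem f → ∫⁻ ω, ENNReal.ofReal |f ω * h ω| ∂μ < ⊤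

/-- The Köthe dual norm. -/
def kNrm (mem : (Ω →ₘ[μ] ℝ) → Prop) (nrm : (Ω →ₘ[μ] ℝ) → ℝ) (h : Ω →ₘ[μ] ℝ) : ℝ :=
  ⨆ f : {f : Ω →ₘ[μ] ℝ // mem f ∧ nrm f ≤ 1}, ∫ ω, |f.1 ω * h ω| ∂μ

/-- The positive part of the closed unit ball of the Köthe dual. -/
def kothePosBall (mem : (Ω →ₘ[μ] ℝ) → Prop) (nrm : (Ω →ₘ[μ] ℝ) → ℝ) :
    Set (Ω →ₘ[μ] ℝ) :=
  {h | 0 ≤ h ∧ ∀ f, mem f → ∫⁻ ω, ENNReal.ofReal |f ω * h ω| ∂μ ≤ ENNReal.ofReal (nrm f)}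

/-- The positive part of the Köthe-dual unit ball, as a type carrying the topology
`σ(X', X)` of pointwise convergence of the pairings, and its Borel σ-algebra. -/
def KBallPos (mem : (Ω →ₘ[μ] ℝ) → Prop) (nrm : (Ω →ₘ[μ] ℝ) → ℝ) : Type _ :=
  ↥(kothePosBall (μ := μ) mem nrm)

/-- The underlying function of an element of the Köthe-dual ball. -/
def KBallPos.fn {mem : (Ω →ₘ[μ] ℝ) → Prop} {nrm : (Ω →ₘ[μ] ℝ) → ℝ}
    (h : KBallPos (μ := μ) mem nrm) : Ω →ₘ[μ] ℝ :=
  Subtype.val h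

instance {mem : (Ω →ₘ[μ] ℝ) → Prop} {nrm : (Ω →ₘ[μ] ℝ) → ℝ} :
    TopologicalSpace (KBallPos (μ := μ) mem nrm) :=
  TopologicalSpace.induced
    (fun h => fun f : (Ω →ₘ[μ] ℝ) => ∫ ω, f ω * (KBallPos.fn h) ω ∂μ) Pi.topologicalSpace

instance {mem : (Ω →ₘ[μ] ℝ) → Prop} {nrm : (Ω →ₘ[μ] ℝ) → ℝ} :
    MeasurableSpace (KBallPos (μ := μ) mem nrm) := borel _

/-- Membership in the space `S^q_{X_p}(ξ)`. -/
def sMem {mem : (Ω →ₘ[μ] ℝ) → Prop} {nrm : (Ω →ₘ[μ] ℝ) → ℝ} (p q : ℝ)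
    (ξ : Measure (KBallPos (μ := μ) mem nrm)) (f : Ω →ₘ[μ] ℝ) : Prop :=
  (∫⁻ h, (∫⁻ ω, ENNReal.ofReal (|f ω| ^ p * (KBallPos.fn h) ω) ∂μ) ^ (q / p) ∂ξ) < ⊤

/-- The norm of the space `S^q_{X_p}(ξ)`:
`‖f‖ = (∫ (∫ |f|^p h dμ)^{q/p} dξ(h))^{1/q}`. -/
def sNrm {mem : (Ω →ₘ[μ] ℝ) → Prop} {nrm : (Ω →ₘ[μ] ℝ) → ℝ} (p q : ℝ)
    (ξ : Measure (KBallPos (μ := μ) mem nrm)) (f : Ω →ₘ[μ] ℝ) : ℝ :=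
  ((∫⁻ h, (∫⁻ ω, ENNReal.ofReal (|f ω| ^ p * (KBallPos.fn h) ω) ∂μ) ^ (q / p) ∂ξ) ^ q⁻¹).toReal

end Preamble

section Operators

/-- A bounded linear operator between Banach function lattices, as a map of `L⁰` spaces. -/
def IsBddOp {Ω₁ Ω₂ : Type} [MeasurableSpace Ω₁] [MeasurableSpace Ω₂]
    {μ₁ : Measure Ω₁} {μ₂ : Measure Ω₂} (X : BFL Ω₁ μ₁) (Y : BFL Ω₂ μ₂)
    (T : (Ω₁ →ₘ[μ₁] ℝ) → (Ω₂ →ₘ[μ₂] ℝ)) : Prop :=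
  (∀ f, X.mem f → Y.mem (T f)) ∧
  (∀ f g, X.mem f → X.mem g → T (f + g) = T f + T g) ∧
  (∀ (c : ℝ) f, X.mem f → T (c • f) = c • T f) ∧
  ∃ K, ∀ f, X.mem f → Y.nrm (T f) ≤ K * X.nrm f

/-- A bounded linear operator from a Banach function lattice into a normed space. -/
def IsBddOpE {Ω : Type} [MeasurableSpace Ω] {μ : Measure Ω} (X : BFL Ω μ) {E : Type}
    [NormedAddCommGroup E] [NormedSpace ℝ E] (T : (Ω →ₘ[μ] ℝ) → E) : Prop :=
  (∀ f g, X.mem f → X.mem g → T (f + g) = T f + T g) ∧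
  (∀ (c : ℝ) f, X.mem f → T (c • f) = c • T f) ∧
  ∃ K, ∀ f, X.mem f → ‖T f‖ ≤ K * X.nrm f

/-- `T : X → Y` is `(p₁,p₂)`-strongly `(q₁,q₂)`-concave with constant `C`:
`|∑ₖ ⟨T xₖ, yₖ'⟩| ≤ C · sup_{α ∈ B_{r₁}} ‖(∑ |αₖ xₖ|^{p₁})^{1/p₁}‖_X ·
sup_{β ∈ B_{r₂}} ‖(∑ |βₖ yₖ'|^{p₂})^{1/p₂}‖_{Y'}` for all finite sequences in `X` and `Y'`. -/
def StrongPair {Ω₁ Ω₂ : Type} [MeasurableSpace Ω₁] [MeasurableSpace Ω₂]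
    {μ₁ : Measure Ω₁} {μ₂ : Measure Ω₂} (X : BFL Ω₁ μ₁) (Y : BFL Ω₂ μ₂)
    (p₁ q₁ p₂ q₂ : ℝ) (T : (Ω₁ →ₘ[μ₁] ℝ) → (Ω₂ →ₘ[μ₂] ℝ)) (C : ℝ) : Prop :=
  ∀ (n : ℕ) (x : Fin n → (Ω₁ →ₘ[μ₁] ℝ)) (y : Fin n → (Ω₂ →ₘ[μ₂] ℝ)),
    (∀ k, X.mem (x k)) → (∀ k, kMem Y.mem (y k)) →
    |∑ k, ∫ ω, (T (x k)) ω * (y k) ω ∂μ₂| ≤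
      C * (strongSup X.nrm p₁ q₁ x * strongSup (kNrm Y.mem Y.nrm) p₂ q₂ y)

/-- A bounded `m`-linear operator on a product of Banach function lattices. -/
def MultilinearBdd {m : ℕ} {Ω : Fin m → Type} [∀ j, MeasurableSpace (Ω j)]
    {μ : ∀ j, Measure (Ω j)} (X : ∀ j, BFL (Ω j) (μ j))
    {Y : Type} [NormedAddCommGroup Y] [NormedSpace ℝ Y]
    (T : (∀ j, (Ω j →ₘ[μ j] ℝ)) → Y) : Prop :=
  (∀ x, (∀ j, (X j).mem (x j)) → ∀ j f g, (X j).mem f → (X j).mem g →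
      T (Function.update x j (f + g)) = T (Function.update x j f) + T (Function.update x j g)) ∧
  (∀ x, (∀ j, (X j).mem (x j)) → ∀ j (c : ℝ) f, (X j).mem f →
      T (Function.update x j (c • f)) = c • T (Function.update x j f)) ∧
  ∃ K, ∀ x, (∀ j, (X j).mem (x j)) → ‖T x‖ ≤ K * ∏ j, (X j).nrm (x j)

/-- An `m`-linear operator is `(p₁,…,p_m)`-strongly `(q₁,…,q_m)`-concave with constant `C`,
where `1/q = ∑ⱼ 1/qⱼ`:
`(∑ₖ ‖T(x¹ₖ,…,xᵐₖ)‖^q)^{1/q} ≤ C ∏ⱼ sup_{βʲ ∈ B_{rⱼ}} ‖(∑ₖ |βʲₖ xʲₖ|^{pⱼ})^{1/pⱼ}‖_{Xⱼ}`. -/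
def StronglyConcaveML {m : ℕ} {Ω : Fin m → Type} [∀ j, MeasurableSpace (Ω j)]
    {μ : ∀ j, Measure (Ω j)} (X : ∀ j, BFL (Ω j) (μ j)) (p q : Fin m → ℝ)
    {Y : Type} [NormedAddCommGroup Y]
    (T : (∀ j, (Ω j →ₘ[μ j] ℝ)) → Y) (C : ℝ) : Prop :=
  ∀ (n : ℕ) (x : ∀ j, Fin n → (Ω j →ₘ[μ j] ℝ)), (∀ j k, (X j).mem (x j k)) →
    (∑ k, ‖T fun j => x j k‖ ^ (∑ j, (q j)⁻¹)⁻¹) ^ (∑ j, (q j)⁻¹) ≤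
      C * ∏ j, strongSup (X j).nrm (p j) (q j) (x j)

/-- A Banach space, packaged as a structure. -/
structure BanachSpaceStruct where
  E : Type
  grp : NormedAddCommGroup E
  mod : NormedSpace ℝ E
  cpl : CompleteSpace E

attribute [instance] BanachSpaceStruct.grp BanachSpaceStruct.mod BanachSpaceStruct.cpl

end Operators

section AuxReal

open Finset

lemma aux_rpow_pred {a p : ℝ} (ha : 0 ≤ a) (hp : 0 < p) : a ^ (p - 1) * a = a ^ p := by
  have h : p - 1 + 1 ≠ 0 := by rw [sub_add_cancel]; exact hp.ne'
  calc a ^ (p - 1) * a = a ^ (p - 1) * a ^ (1 : ℝ) := by rw [Real.rpow_one]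
    _ = a ^ (p - 1 + 1) := (Real.rpow_add' ha h).symm
    _ = a ^ p := by rw [sub_add_cancel]

lemma aux_lq_le_l1 {n : ℕ} {s : ℝ} (hs : 1 ≤ s) (t : Fin n → ℝ) (ht : ∀ k, 0 ≤ t k) :
    (∑ k, t k ^ s) ^ s⁻¹ ≤ ∑ k, t k := by
  have hs0 : 0 < s := lt_of_lt_of_le one_pos hs
  have hT : 0 ≤ ∑ k, t k := Finset.sum_nonneg fun k _ => ht k
  have h1 : ∑ k, t k ^ s ≤ (∑ k, t k) ^ s := by
    calc ∑ k, t k ^ s ≤ ∑ k, t k * (∑ j, t j) ^ (s - 1) := by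
          refine Finset.sum_le_sum fun k _ => ?_
          have h2 : t k ^ s = t k ^ (s - 1) * t k := (aux_rpow_pred (ht k) hs0).symm
          rw [h2, mul_comm]
          exact mul_le_mul_of_nonneg_left
            (Real.rpow_le_rpow (ht k)
              (Finset.single_le_sum (fun j _ => ht j) (Finset.mem_univ k)) (by linarith))
            (ht k)
      _ = (∑ k, t k) * (∑ k, t k) ^ (s - 1) := by rw [← Finset.sum_mul]
      _ = (∑ k, t k) ^ s := by
          rw [mul_comm]
          exact aux_rpow_pred hT hs0
  calc (∑ k, t k ^ s) ^ s⁻¹ ≤ ((∑ k, t k) ^ s) ^ s⁻¹ :=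
        Real.rpow_le_rpow (Finset.sum_nonneg fun k _ => Real.rpow_nonneg (ht k) s) h1
          (inv_nonneg.mpr hs0.le)
    _ = ∑ k, t k := by
        rw [← Real.rpow_mul hT, mul_inv_cancel₀ hs0.ne', Real.rpow_one]

lemma aux_holder_weighted {n : ℕ} {p : ℝ} (hp : 1 ≤ p) (c t : Fin n → ℝ)
    (hc : ∀ k, 0 ≤ c k) (ht : ∀ k, 0 ≤ t k) :
    ∑ k, c k ^ (p - 1) * t k ≤ (∑ k, c k ^ p) ^ ((p - 1) / p) * (∑ k, t k ^ p) ^ p⁻¹ := by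
  rcases eq_or_lt_of_le hp with h1 | h1
  · subst h1
    norm_num [Real.rpow_zero, Real.rpow_one]
  · have hp0 : 0 < p := by linarith
    have hp1 : (0:ℝ) < p - 1 := by linarith
    have hconj : Real.HolderConjugate (p / (p - 1)) p := by
      rw [Real.holderConjugate_iff]
      constructor
      · rw [one_lt_div hp1]; linarith
      · rw [inv_div]
        field_simp
        ring
    have H := Real.inner_le_Lp_mul_Lq Finset.univ (fun k => c k ^ (p - 1)) t hconj
    have e1 : ∀ k : Fin n, |c k ^ (p - 1)| ^ (p / (p - 1)) = c k ^ p := by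
      intro k
      rw [abs_of_nonneg (Real.rpow_nonneg (hc k) _), ← Real.rpow_mul (hc k)]
      congr 1
      field_simp
    have e2 : ∀ k : Fin n, |t k| ^ p = t k ^ p := fun k => by rw [abs_of_nonneg (ht k)]
    simp only [e1, e2, inv_div, one_div] at H
    exact H

lemma aux_holder_pq {n : ℕ} {p q : ℝ} (hp : 0 < p) (hpq : p < q) (b t : Fin n → ℝ)
    (hb : ∀ k, 0 ≤ b k) (ht : ∀ k, 0 ≤ t k)
    (hb1 : ∑ k, b k ^ (1 / p - 1 / q)⁻¹ ≤ 1) :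
    (∑ k, (b k * t k) ^ p) ^ p⁻¹ ≤ (∑ k, t k ^ q) ^ q⁻¹ := by
  have hq0 : 0 < q := hp.trans hpq
  have he : 0 < 1 / p - 1 / q := by
    have := one_div_lt_one_div_of_lt hp hpq
    linarith
  set r := (1 / p - 1 / q)⁻¹ with hr
  have hr0 : 0 < r := inv_pos.mpr he
  have hrp : p < r := by
    have h2 : 1 / p - 1 / q < 1 / p := by
      have : 0 < 1 / q := by positivity
      linarith
    have h3 := one_div_lt_one_div_of_lt he h2
    rw [hr]
    rw [one_div, one_div] at h3
    simpa using h3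
  have hconj : Real.HolderConjugate (r / p) (q / p) := by
    rw [Real.holderConjugate_iff]
    constructor
    · rw [one_lt_div hp]; exact hrp
    · rw [inv_div, inv_div, hr, div_eq_mul_inv, inv_inv]
      field_simp
      ring
  have H := Real.inner_le_Lp_mul_Lq Finset.univ (fun k => b k ^ p) (fun k => t k ^ p) hconj
  have e1 : ∀ k : Fin n, |b k ^ p| ^ (r / p) = b k ^ r := by
    intro k
    rw [abs_of_nonneg (Real.rpow_nonneg (hb k) _), ← Real.rpow_mul (hb k)]
    congr 1
    field_simp
  have e2 : ∀ k : Fin n, |t k ^ p| ^ (q / p) = t k ^ q := by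
    intro k
    rw [abs_of_nonneg (Real.rpow_nonneg (ht k) _), ← Real.rpow_mul (ht k)]
    congr 1
    field_simp
  simp only [e1, e2, one_div_div] at H
  have hb2 : (∑ k, b k ^ r) ^ (p / r) ≤ 1 :=
    Real.rpow_le_one (Finset.sum_nonneg fun k _ => Real.rpow_nonneg (hb k) _)
      (by rw [hr] at hb1 ⊢; exact hb1) (by positivity)
  have htq : 0 ≤ ∑ k, t k ^ q := Finset.sum_nonneg fun k _ => Real.rpow_nonneg (ht k) _
  have H2 : ∑ k, (b k * t k) ^ p ≤ (∑ k, t k ^ q) ^ (p / q) := by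
    have e3 : ∑ k, (b k * t k) ^ p = ∑ k, b k ^ p * t k ^ p :=
      Finset.sum_congr rfl fun k _ => Real.mul_rpow (hb k) (ht k)
    rw [e3]
    calc ∑ k, b k ^ p * t k ^ p
        ≤ (∑ k, b k ^ r) ^ (p / r) * (∑ k, t k ^ q) ^ (p / q) := H
      _ ≤ 1 * (∑ k, t k ^ q) ^ (p / q) :=
          mul_le_mul_of_nonneg_right hb2 (Real.rpow_nonneg htq _)
      _ = (∑ k, t k ^ q) ^ (p / q) := one_mul _
  calc (∑ k, (b k * t k) ^ p) ^ p⁻¹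
      ≤ ((∑ k, t k ^ q) ^ (p / q)) ^ p⁻¹ :=
        Real.rpow_le_rpow (Finset.sum_nonneg fun k _ =>
          Real.rpow_nonneg (mul_nonneg (hb k) (ht k)) _) H2 (by positivity)
    _ = (∑ k, t k ^ q) ^ q⁻¹ := by
        rw [← Real.rpow_mul htq]
        congr 1
        field_simp

end AuxReal

section AuxAE

open MeasureTheory

variable {Ω : Type} [MeasurableSpace Ω] {μ : Measure Ω}

lemma coeFn_pSum (s : ℝ) {n : ℕ} (x : Fin n → (Ω →ₘ[μ] ℝ)) :
    ⇑(pSum s x) =ᵐ[μ] fun ω => (∑ k, |x k ω| ^ s) ^ s⁻¹ :=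
  AEEqFun.coeFn_mk _ _

lemma coeFn_finsetSum {ι : Type} (s : Finset ι) (z : ι → (Ω →ₘ[μ] ℝ)) :
    ⇑(∑ k ∈ s, z k) =ᵐ[μ] fun ω => ∑ k ∈ s, z k ω := by
  classical
  induction s using Finset.induction_on with
  | empty => simp only [Finset.sum_empty]; exact AEEqFun.coeFn_zero
  | @insert a s ha ih =>
    rw [Finset.sum_insert ha]
    filter_upwards [AEEqFun.coeFn_add (z a) (∑ k ∈ s, z k), ih] with ω h1 h2
    simp only [Finset.sum_insert ha]
    rw [h1, Pi.add_apply, h2]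

lemma mem_pSum (X : BFL Ω μ) {s : ℝ} (hs : 1 ≤ s) {n : ℕ} (x : Fin n → (Ω →ₘ[μ] ℝ))
    (hx : ∀ k, X.mem (x k)) : X.mem (pSum s x) := by
  have habs : ∀ k, X.mem |x k| := by
    intro k
    refine X.ideal _ _ (hx k) ?_
    rw [← AEEqFun.coeFn_le]
    filter_upwards [AEEqFun.coeFn_abs (|x k|), AEEqFun.coeFn_abs (x k)] with ω h1 h2
    rw [h1, h2]
    exact (abs_abs _).le
  have hsum : X.mem (∑ k, |x k|) :=
    Finset.sum_induction _ _ (fun a b ha hb => X.add_mem _ _ ha hb) X.zero_mem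
      (fun k _ => habs k)
  refine X.ideal _ _ hsum ?_
  rw [← AEEqFun.coeFn_le]
  filter_upwards [coeFn_pSum s x, coeFn_finsetSum Finset.univ (fun k => |x k|),
    AEEqFun.coeFn_abs (pSum s x), AEEqFun.coeFn_abs (∑ k, |x k|),
    ae_all_iff.mpr fun k => AEEqFun.coeFn_abs (x k)] with ω h1 h2 h3 h4 h5
  rw [h3, h4, h1, h2]
  have h6 : ∀ k : Fin n, |x k| ω = |x k ω| := h5
  rw [Finset.sum_congr rfl fun k _ => h6 k]
  rw [abs_of_nonneg (Real.rpow_nonneg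
    (Finset.sum_nonneg fun k _ => Real.rpow_nonneg (abs_nonneg _) _) _)]
  rw [abs_of_nonneg (Finset.sum_nonneg fun k _ => abs_nonneg _)]
  exact aux_lq_le_l1 hs (fun k => |x k ω|) (fun k => abs_nonneg _)

lemma coeFn_pSum_smul (p : ℝ) {n : ℕ} (β : Fin n → ℝ) (x : Fin n → (Ω →ₘ[μ] ℝ)) :
    ⇑(pSum p fun k => β k • x k) =ᵐ[μ] fun ω => (∑ k, |β k * x k ω| ^ p) ^ p⁻¹ := by
  filter_upwards [coeFn_pSum p (fun k => β k • x k),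
    ae_all_iff.mpr fun k => AEEqFun.coeFn_smul (β k) (x k)] with ω h1 h2
  rw [h1]
  congr 1
  refine Finset.sum_congr rfl fun k _ => ?_
  rw [h2 k]
  simp [smul_eq_mul]

lemma nrm_pSum_smul_le (X : BFL Ω μ) {p q : ℝ} (hp1 : 1 ≤ p) (hpq : p < q) {n : ℕ}
    (x : Fin n → (Ω →ₘ[μ] ℝ)) (hx : ∀ k, X.mem (x k)) (β : Fin n → ℝ)
    (hβ : ∑ k, |β k| ^ (1 / p - 1 / q)⁻¹ ≤ 1) :
    X.nrm (pSum p fun k => β k • x k) ≤ X.nrm (pSum q x) := by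
  have hq1 : 1 ≤ q := hp1.trans hpq.le
  refine X.nrm_mono _ _ (mem_pSum X hq1 x hx) ?_
  rw [← AEEqFun.coeFn_le]
  filter_upwards [coeFn_pSum_smul p β x, coeFn_pSum q x,
    AEEqFun.coeFn_abs (pSum p fun k => β k • x k), AEEqFun.coeFn_abs (pSum q x)]
    with ω h1 h2 h3 h4
  rw [h3, h4, h1, h2]
  rw [abs_of_nonneg (Real.rpow_nonneg
    (Finset.sum_nonneg fun k _ => Real.rpow_nonneg (abs_nonneg _) _) _)]
  rw [abs_of_nonneg (Real.rpow_nonneg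
    (Finset.sum_nonneg fun k _ => Real.rpow_nonneg (abs_nonneg _) _) _)]
  have := aux_holder_pq (by linarith : (0:ℝ) < p) hpq (fun k => |β k|) (fun k => |x k ω|)
    (fun k => abs_nonneg _) (fun k => abs_nonneg _) hβ
  simpa [abs_mul] using this

lemma dual_sum_le (X : BFL Ω μ) {p : ℝ} (hp : 1 ≤ p) {n : ℕ}
    (y : Fin n → (Ω →ₘ[μ] ℝ)) (hy : ∀ k, X.mem (y k))
    (φ : (Ω →ₘ[μ] ℝ) → ℝ) (hφ : φ ∈ dualBall X.mem X.nrm) :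
    (∑ k, |φ (y k)| ^ p) ^ p⁻¹ ≤ X.nrm (pSum p y) := by
  obtain ⟨hadd, hsmul, hbd⟩ := hφ
  have hp0 : (0:ℝ) < p := lt_of_lt_of_le one_pos hp
  have hφ0 : φ 0 = 0 := by
    have := hsmul 0 0 X.zero_mem
    simpa using this
  have hsum : ∀ (s : Finset (Fin n)) (z : Fin n → (Ω →ₘ[μ] ℝ)), (∀ k, X.mem (z k)) →
      X.mem (∑ k ∈ s, z k) ∧ φ (∑ k ∈ s, z k) = ∑ k ∈ s, φ (z k) := by
    intro s z hz
    classical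
    induction s using Finset.induction_on with
    | empty => simpa using ⟨X.zero_mem, hφ0⟩
    | @insert a s ha ih =>
      obtain ⟨hm, hev⟩ := ih
      rw [Finset.sum_insert ha, Finset.sum_insert ha]
      exact ⟨X.add_mem _ _ (hz a) hm, by rw [hadd _ _ (hz a) hm, hev]⟩
  set S := ∑ k, |φ (y k)| ^ p with hS
  have hS0 : 0 ≤ S :=
    Finset.sum_nonneg fun k _ => Real.rpow_nonneg (abs_nonneg _) _
  have hnrm0 : 0 ≤ X.nrm (pSum p y) := X.nrm_nonneg _
  rcases hS0.eq_or_lt with h0 | hSpos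
  · rw [← h0, Real.zero_rpow (inv_ne_zero hp0.ne')]
    exact hnrm0
  · set γ : Fin n → ℝ :=
      fun k => |φ (y k)| ^ (p - 1) * (if φ (y k) < 0 then (-1:ℝ) else 1) with hγ
    have hγabs : ∀ k, |γ k| = |φ (y k)| ^ (p - 1) := by
      intro k
      rw [hγ]
      simp only [abs_mul]
      rw [abs_of_nonneg (Real.rpow_nonneg (abs_nonneg _) _)]
      split_ifs <;> simp
    obtain ⟨hZmem, hZ⟩ := hsum Finset.univ (fun k => γ k • y k)
      (fun k => X.smul_mem _ _ (hy k))
    have hφZ : φ (∑ k, γ k • y k) = S := by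
      rw [hZ, hS]
      refine Finset.sum_congr rfl fun k _ => ?_
      rw [hsmul _ _ (hy k), hγ]
      have h1 : (if φ (y k) < 0 then (-1:ℝ) else 1) * φ (y k) = |φ (y k)| := by
        split_ifs with hneg
        · rw [abs_of_neg hneg]; ring
        · rw [abs_of_nonneg (not_lt.mp hneg)]; ring
      calc |φ (y k)| ^ (p - 1) * (if φ (y k) < 0 then (-1:ℝ) else 1) * φ (y k)
          = |φ (y k)| ^ (p - 1) * ((if φ (y k) < 0 then (-1:ℝ) else 1) * φ (y k)) := by ring
        _ = |φ (y k)| ^ (p - 1) * |φ (y k)| := by rw [h1]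
        _ = |φ (y k)| ^ p := aux_rpow_pred (abs_nonneg _) hp0
    have hle1 : S ≤ X.nrm (∑ k, γ k • y k) := by
      calc S = φ (∑ k, γ k • y k) := hφZ.symm
        _ ≤ |φ (∑ k, γ k • y k)| := le_abs_self _
        _ ≤ X.nrm (∑ k, γ k • y k) := hbd _ hZmem
    have hmemPS : X.mem (pSum p y) := mem_pSum X hp y hy
    have hle2 : X.nrm (∑ k, γ k • y k) ≤ S ^ ((p - 1) / p) * X.nrm (pSum p y) := by
      have hmono := X.nrm_mono (∑ k, γ k • y k) ((S ^ ((p - 1) / p)) • pSum p y)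
        (X.smul_mem _ _ hmemPS) ?_
      · rw [X.nrm_smul _ _ hmemPS, abs_of_nonneg (Real.rpow_nonneg hS0 _)] at hmono
        exact hmono
      · rw [← AEEqFun.coeFn_le]
        filter_upwards [coeFn_finsetSum Finset.univ (fun k => γ k • y k), coeFn_pSum p y,
          AEEqFun.coeFn_abs (∑ k, γ k • y k),
          AEEqFun.coeFn_abs ((S ^ ((p - 1) / p)) • pSum p y),
          AEEqFun.coeFn_smul (S ^ ((p - 1) / p)) (pSum p y),
          ae_all_iff.mpr fun k => AEEqFun.coeFn_smul (γ k) (y k)] with ω h1 h2 h3 h4 h5 h6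
        rw [h3, h4, h5, h1]
        have hV : (0:ℝ) ≤ (∑ k, |y k ω| ^ p) ^ p⁻¹ :=
          Real.rpow_nonneg (Finset.sum_nonneg fun k _ => Real.rpow_nonneg (abs_nonneg _) _) _
        have hRHS : |(S ^ ((p - 1) / p) • ⇑(pSum p y)) ω| =
            S ^ ((p - 1) / p) * (∑ k, |y k ω| ^ p) ^ p⁻¹ := by
          rw [Pi.smul_apply, smul_eq_mul, h2, abs_of_nonneg
            (mul_nonneg (Real.rpow_nonneg hS0 _) hV)]
        rw [hRHS]
        calc |∑ k, (γ k • y k) ω| ≤ ∑ k, |(γ k • y k) ω| :=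
              Finset.abs_sum_le_sum_abs _ _
          _ = ∑ k, |φ (y k)| ^ (p - 1) * |y k ω| := by
              refine Finset.sum_congr rfl fun k _ => ?_
              rw [h6 k, Pi.smul_apply, smul_eq_mul, abs_mul, hγabs k]
          _ ≤ (∑ k, |φ (y k)| ^ p) ^ ((p - 1) / p) * (∑ k, |y k ω| ^ p) ^ p⁻¹ :=
              aux_holder_weighted hp (fun k => |φ (y k)|) (fun k => |y k ω|)
                (fun k => abs_nonneg _) (fun k => abs_nonneg _)
          _ = S ^ ((p - 1) / p) * (∑ k, |y k ω| ^ p) ^ p⁻¹ := by rw [← hS]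
    have hSe : 0 < S ^ ((p - 1) / p) := Real.rpow_pos_of_pos hSpos _
    have h7 : S ^ ((p - 1) / p) * S ^ p⁻¹ = S := by
      rw [← Real.rpow_add hSpos, show (p - 1) / p + p⁻¹ = 1 by field_simp; ring, Real.rpow_one]
    have h8 := hle1.trans hle2
    exact le_of_mul_le_mul_left (h7.trans_le h8) hSe

lemma zero_mem_strongBall {p q : ℝ} (hp : 0 < p) (hpq : p < q) (n : ℕ) :
    (0 : Fin n → ℝ) ∈ strongBall p q n := by
  have hq0 : 0 < q := hp.trans hpq
  have he : 0 < 1 / p - 1 / q := by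
    have := one_div_lt_one_div_of_lt hp hpq
    linarith
  simp only [strongBall, Set.mem_setOf_eq, if_neg hpq.ne]
  have hz : ∀ k : Fin n, |(0 : Fin n → ℝ) k| ^ (1 / p - 1 / q)⁻¹ = 0 := by
    intro k
    simp only [Pi.zero_apply, abs_zero]
    exact Real.zero_rpow (inv_ne_zero he.ne')
  rw [Finset.sum_congr rfl fun k _ => hz k]
  simp

lemma strongSup_nonneg (X : BFL Ω μ) (p q : ℝ) {n : ℕ} (x : Fin n → (Ω →ₘ[μ] ℝ)) :
    0 ≤ strongSup X.nrm p q x := by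
  unfold strongSup
  exact Real.iSup_nonneg fun γ => X.nrm_nonneg _

lemma strongSup_le_nrm (X : BFL Ω μ) {p q : ℝ} (hp1 : 1 ≤ p) (hpq : p < q) {n : ℕ}
    (x : Fin n → (Ω →ₘ[μ] ℝ)) (hx : ∀ k, X.mem (x k)) :
    strongSup X.nrm p q x ≤ X.nrm (pSum q x) := by
  have hp0 : (0:ℝ) < p := lt_of_lt_of_le one_pos hp1
  haveI : Nonempty ↥(strongBall p q n) := ⟨⟨0, zero_mem_strongBall hp0 hpq n⟩⟩
  unfold strongSup
  refine ciSup_le fun γ => ?_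
  have hγ := γ.2
  simp only [strongBall, Set.mem_setOf_eq, if_neg hpq.ne] at hγ
  exact nrm_pSum_smul_le X hp1 hpq x hx _ hγ

lemma le_strongSup (X : BFL Ω μ) {p q : ℝ} (hp1 : 1 ≤ p) (hpq : p < q) {n : ℕ}
    (x : Fin n → (Ω →ₘ[μ] ℝ)) (hx : ∀ k, X.mem (x k)) {β : Fin n → ℝ}
    (hβ : β ∈ strongBall p q n) :
    X.nrm (pSum p fun k => β k • x k) ≤ strongSup X.nrm p q x := by
  have hbdd : BddAbove (Set.range fun γ : ↥(strongBall p q n) =>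
      X.nrm (pSum p fun k => γ.1 k • x k)) := by
    refine ⟨X.nrm (pSum q x), ?_⟩
    rintro v ⟨γ, rfl⟩
    have hγ := γ.2
    simp only [strongBall, Set.mem_setOf_eq, if_neg hpq.ne] at hγ
    exact nrm_pSum_smul_le X hp1 hpq x hx _ hγ
  exact le_ciSup hbdd (⟨β, hβ⟩ : ↥(strongBall p q n))

end AuxAE



/-- for `1 ≤ p < q` and a bounded operator `T` from a Banach function
lattice into a Banach space: (a) if `T` is `p`-summing then `T` is `p`-strongly
`q`-concave; (b) if `T` is `p`-strongly `q`-concave with constant `C` then `T` is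
`q`-concave with constant `C`. -/
theorem statement13 {Ω : Type} [MeasurableSpace Ω] (μ : Measure Ω) [SigmaFinite μ]
    (X : BFL Ω μ) (p q : ℝ) (hp : 1 ≤ p) (hpq : p < q)
    {E : Type} [NormedAddCommGroup E] [NormedSpace ℝ E] [CompleteSpace E]
    (T : (Ω →ₘ[μ] ℝ) → E) (hT : IsBddOpE X T) :
    ((∃ C > 0, ∀ (n : ℕ) (x : Fin n → (Ω →ₘ[μ] ℝ)), (∀ k, X.mem (x k)) →
        (∑ k, ‖T (x k)‖ ^ p) ^ p⁻¹ ≤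
          C * ⨆ φ : ↥(dualBall X.mem X.nrm), (∑ k, |φ.1 (x k)| ^ p) ^ p⁻¹) →
      (∃ C > 0, ∀ (n : ℕ) (x : Fin n → (Ω →ₘ[μ] ℝ)), (∀ k, X.mem (x k)) →
        (∑ k, ‖T (x k)‖ ^ q) ^ q⁻¹ ≤ C * strongSup X.nrm p q x)) ∧
    (∀ C : ℝ, 0 < C →
      (∀ (n : ℕ) (x : Fin n → (Ω →ₘ[μ] ℝ)), (∀ k, X.mem (x k)) →
        (∑ k, ‖T (x k)‖ ^ q) ^ q⁻¹ ≤ C * strongSup X.nrm p q x) →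
      ∀ (n : ℕ) (x : Fin n → (Ω →ₘ[μ] ℝ)), (∀ k, X.mem (x k)) →
        (∑ k, ‖T (x k)‖ ^ q) ^ q⁻¹ ≤ C * X.nrm (pSum q x)) := by
  have hp0 : (0:ℝ) < p := lt_of_lt_of_le one_pos hp
  have hq0 : (0:ℝ) < q := hp0.trans hpq
  have he : 0 < 1 / p - 1 / q := by
    have := one_div_lt_one_div_of_lt hp0 hpq
    linarith
  constructor
  · rintro ⟨C, hC, hsum⟩
    refine ⟨C, hC, fun n x hx => ?_⟩
    set S := ∑ k, ‖T (x k)‖ ^ q with hSdef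
    have hS0 : 0 ≤ S := Finset.sum_nonneg fun k _ => Real.rpow_nonneg (norm_nonneg _) _
    rcases hS0.eq_or_lt with h0 | hSpos
    · rw [← h0, Real.zero_rpow (inv_ne_zero hq0.ne')]
      exact mul_nonneg hC.le (strongSup_nonneg X p q x)
    · set β : Fin n → ℝ := fun k => (‖T (x k)‖ ^ q / S) ^ (1 / p - 1 / q) with hβdef
      have hβk : ∀ k, 0 ≤ β k := fun k =>
        Real.rpow_nonneg (div_nonneg (Real.rpow_nonneg (norm_nonneg _) _) hS0) _
      have hβr : ∑ k, |β k| ^ (1 / p - 1 / q)⁻¹ = 1 := by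
        have hterm : ∀ k : Fin n, |β k| ^ (1 / p - 1 / q)⁻¹ = ‖T (x k)‖ ^ q / S := by
          intro k
          rw [abs_of_nonneg (hβk k)]
          simp only [hβdef]
          rw [← Real.rpow_mul (div_nonneg (Real.rpow_nonneg (norm_nonneg _) _) hS0),
            mul_inv_cancel₀ he.ne', Real.rpow_one]
        rw [Finset.sum_congr rfl fun k _ => hterm k, ← Finset.sum_div, ← hSdef,
          div_self hSpos.ne']
      have hβmem : β ∈ strongBall p q n := by
        simp only [strongBall, Set.mem_setOf_eq, if_neg hpq.ne]
        rw [hβr]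
      have hexp : q * ((1 / p - 1 / q) * p) + p = q := by
        field_simp
        ring
      have hkey : ∑ k, ‖T (β k • x k)‖ ^ p = S ^ (p / q) := by
        have hterm : ∀ k : Fin n,
            ‖T (β k • x k)‖ ^ p = ‖T (x k)‖ ^ q / S ^ ((1 / p - 1 / q) * p) := by
          intro k
          rw [hT.2.1 (β k) (x k) (hx k), norm_smul, Real.norm_eq_abs,
            abs_of_nonneg (hβk k), Real.mul_rpow (hβk k) (norm_nonneg _)]
          simp only [hβdef]
          rw [← Real.rpow_mul (div_nonneg (Real.rpow_nonneg (norm_nonneg _) _) hS0),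
            Real.div_rpow (Real.rpow_nonneg (norm_nonneg _) _) hS0,
            ← Real.rpow_mul (norm_nonneg _), div_mul_eq_mul_div,
            ← Real.rpow_add' (norm_nonneg _) (by rw [hexp]; exact hq0.ne'), hexp]
        rw [Finset.sum_congr rfl fun k _ => hterm k, ← Finset.sum_div, ← hSdef]
        have h9 : S ^ (p / q) = S / S ^ ((1 / p - 1 / q) * p) := by
          rw [show p / q = 1 - (1 / p - 1 / q) * p by field_simp; ring,
            Real.rpow_sub hSpos, Real.rpow_one]
        rw [h9]
      have hmain := hsum n (fun k => β k • x k) (fun k => X.smul_mem _ _ (hx k))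
      have hiSup : (⨆ φ : ↥(dualBall X.mem X.nrm), (∑ k, |φ.1 (β k • x k)| ^ p) ^ p⁻¹)
          ≤ X.nrm (pSum p fun k => β k • x k) := by
        haveI : Nonempty ↥(dualBall X.mem X.nrm) := by
          refine ⟨⟨fun _ => 0, ?_, ?_, ?_⟩⟩
          · intro f g _ _; ring
          · intro c f _; ring
          · intro f _; simpa using X.nrm_nonneg f
        exact ciSup_le fun φ =>
          dual_sum_le X hp _ (fun k => X.smul_mem _ _ (hx k)) φ.1 φ.2
      calc S ^ q⁻¹ = (∑ k, ‖T (β k • x k)‖ ^ p) ^ p⁻¹ := by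
            rw [hkey, ← Real.rpow_mul hS0]
            congr 1
            field_simp
        _ ≤ C * ⨆ φ : ↥(dualBall X.mem X.nrm), (∑ k, |φ.1 (β k • x k)| ^ p) ^ p⁻¹ := hmain
        _ ≤ C * strongSup X.nrm p q x :=
            mul_le_mul_of_nonneg_left
              (hiSup.trans (le_strongSup X hp hpq x hx hβmem)) hC.le
  · intro C hC hconc n x hx
    exact (hconc n x hx).trans
      (mul_le_mul_of_nonneg_left (strongSup_le_nrm X hp hpq x hx) hC.le)

end
end

section
/- Let 1 ≤ p ≤ q < ∞ with 1/r = 1/p − 1/q and let X be a p-concave Banach function lattice on a σ-finite measure space with p-concavity constant M_(p)(X). Then the identity map ι : X → X is p-strongly q-concave with constant M_(p)(X); explicitly, ( ∑_{k=1}^n ‖x_k‖_X^q )^{1/q} ≤ M_(p)(X) · sup_{(β_k) ∈ B_r^n} ‖ ( ∑_{k=1}^n |β_k x_k|^p )^{1/p} ‖_X for every finite sequence (x_k)_{k=1}^n in X. -/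
open MeasureTheory Filter

noncomputable section

section MyAux

variable {Ω : Type} [MeasurableSpace Ω] {μ : Measure Ω}

lemma aux_nn_sum_rpow_le {ι : Type} (s : Finset ι) (b : ι → NNReal) {p : ℝ} (hp : 1 ≤ p) :
    ∑ k ∈ s, b k ^ p ≤ (∑ k ∈ s, b k) ^ p := by
  classical
  induction s using Finset.cons_induction with
  | empty => simp [NNReal.zero_rpow (by linarith : p ≠ 0)]
  | cons a s ha ih =>
    rw [Finset.sum_cons, Finset.sum_cons]
    calc b a ^ p + ∑ k ∈ s, b k ^ p ≤ b a ^ p + (∑ k ∈ s, b k) ^ p := by gcongr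
      _ ≤ (b a + ∑ k ∈ s, b k) ^ p := NNReal.add_rpow_le_rpow_add _ _ hp

lemma aux_sum_rpow_le {ι : Type} (s : Finset ι) (a : ι → ℝ) (ha : ∀ k ∈ s, 0 ≤ a k)
    {p : ℝ} (hp : 1 ≤ p) : ∑ k ∈ s, a k ^ p ≤ (∑ k ∈ s, a k) ^ p := by
  have h := aux_nn_sum_rpow_le s (fun k => (a k).toNNReal) hp
  have hc : ((∑ k ∈ s, (fun k => (a k).toNNReal) k : NNReal) : ℝ) = ∑ k ∈ s, a k := by
    push_cast
    exact Finset.sum_congr rfl fun k hk => Real.coe_toNNReal _ (ha k hk)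
  calc ∑ k ∈ s, a k ^ p = ((∑ k ∈ s, (a k).toNNReal ^ p : NNReal) : ℝ) := by
        push_cast
        refine (Finset.sum_congr rfl fun k hk => ?_).symm
        rw [Real.coe_toNNReal _ (ha k hk)]
    _ ≤ ((∑ k ∈ s, (a k).toNNReal : NNReal) ^ p : NNReal) := by
        exact_mod_cast h
    _ = (∑ k ∈ s, a k) ^ p := by
        rw [NNReal.coe_rpow, hc]

lemma aux_lp_le_l1 {ι : Type} (s : Finset ι) (a : ι → ℝ) (ha : ∀ k ∈ s, 0 ≤ a k)
    {p : ℝ} (hp : 1 ≤ p) : (∑ k ∈ s, a k ^ p) ^ p⁻¹ ≤ ∑ k ∈ s, a k := by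
  have hp0 : (0:ℝ) < p := lt_of_lt_of_le zero_lt_one hp
  have h2 : ((∑ k ∈ s, a k) ^ p) ^ p⁻¹ = ∑ k ∈ s, a k := by
    rw [← Real.rpow_mul (Finset.sum_nonneg ha), mul_inv_cancel₀ hp0.ne', Real.rpow_one]
  calc (∑ k ∈ s, a k ^ p) ^ p⁻¹ ≤ ((∑ k ∈ s, a k) ^ p) ^ p⁻¹ := by
        apply Real.rpow_le_rpow (Finset.sum_nonneg fun k hk => Real.rpow_nonneg (ha k hk) p)
          (aux_sum_rpow_le s a ha hp) (by positivity)
    _ = _ := h2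

lemma aux_coeFn_sum {ι : Type} (s : Finset ι) (f : ι → (Ω →ₘ[μ] ℝ)) :
    ⇑(∑ k ∈ s, f k) =ᵐ[μ] fun ω => ∑ k ∈ s, f k ω := by
  classical
  induction s using Finset.cons_induction with
  | empty =>
    simp only [Finset.sum_empty]
    exact MeasureTheory.AEEqFun.coeFn_zero
  | cons a s ha ih =>
    simp only [Finset.sum_cons]
    filter_upwards [MeasureTheory.AEEqFun.coeFn_add (f a) (∑ k ∈ s, f k), ih] with ω h1 h2
    simp [h1, h2]

lemma aux_nrm_zero (X : BFL Ω μ) : X.nrm 0 = 0 := by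
  have h := X.nrm_smul 0 0 X.zero_mem
  simpa using h

/-- `0` belongs to the strong ball. -/
lemma aux_zero_mem_strongBall {p q : ℝ} (hp : 0 < p) (hpq : p ≤ q) (n : ℕ) :
    (0 : Fin n → ℝ) ∈ strongBall p q n := by
  unfold strongBall
  by_cases h : p = q
  · simp [h]
  · have hlt : p < q := lt_of_le_of_ne hpq h
    have hq : (0:ℝ) < q := lt_of_le_of_lt hp.le hlt
    have hs : (0:ℝ) < 1 / p - 1 / q := by
      rw [sub_pos]
      exact one_div_lt_one_div_of_lt hp hlt
    simp only [Set.mem_setOf_eq, if_neg h, Pi.zero_apply, abs_zero]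
    rw [Finset.sum_congr rfl fun k _ => Real.zero_rpow (by positivity : ((1/p - 1/q)⁻¹ : ℝ) ≠ 0)]
    simp

/-- members of the strong ball have coordinates bounded by 1. -/
lemma aux_strongBall_abs_le {p q : ℝ} (hp : 0 < p) (hpq : p ≤ q) {n : ℕ}
    {β : Fin n → ℝ} (hβ : β ∈ strongBall p q n) (k : Fin n) : |β k| ≤ 1 := by
  unfold strongBall at hβ
  by_cases h : p = q
  · rw [Set.mem_setOf_eq, if_pos h] at hβ
    exact hβ k
  · rw [Set.mem_setOf_eq, if_neg h] at hβ
    have hlt : p < q := lt_of_le_of_ne hpq h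
    have hs : (0:ℝ) < 1 / p - 1 / q := by
      rw [sub_pos]; exact one_div_lt_one_div_of_lt hp hlt
    have hr : (0:ℝ) < (1/p - 1/q)⁻¹ := by positivity
    by_contra hcon
    push_neg at hcon
    have h1 : (1:ℝ) < |β k| ^ (1/p - 1/q)⁻¹ :=
      (Real.one_lt_rpow_iff_of_pos (lt_of_lt_of_le zero_lt_one hcon.le)).2 (Or.inl ⟨hcon, hr⟩)
    have h2 : |β k| ^ (1/p - 1/q)⁻¹ ≤ ∑ j, |β j| ^ (1/p - 1/q)⁻¹ := by
      apply Finset.single_le_sum (f := fun j => |β j| ^ (1/p - 1/q)⁻¹)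
        (fun j _ => Real.rpow_nonneg (abs_nonneg _) _) (Finset.mem_univ k)
    linarith

/-- The uniform norm bound over the strong ball. -/
lemma aux_pSum_nrm_le (X : BFL Ω μ) {p q : ℝ} (hp : 1 ≤ p) (hpq : p ≤ q) {n : ℕ}
    (x : Fin n → (Ω →ₘ[μ] ℝ)) (hx : ∀ k, X.mem (x k))
    {β : Fin n → ℝ} (hβ : β ∈ strongBall p q n) :
    X.nrm (pSum p fun k => β k • x k) ≤ X.nrm (∑ k, |x k|) := by
  classical
  have hp0 : (0:ℝ) < p := lt_of_lt_of_le zero_lt_one hp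
  have hb1 : ∀ k, |β k| ≤ 1 := aux_strongBall_abs_le hp0 hpq hβ
  have hmemg : X.mem (∑ k, |x k|) := by
    refine Finset.sum_induction _ X.mem (fun a b ha hb => X.add_mem a b ha hb) X.zero_mem
      (fun k _ => X.ideal |x k| (x k) (hx k) ?_)
    rw [← MeasureTheory.AEEqFun.coeFn_le]
    filter_upwards [MeasureTheory.AEEqFun.coeFn_abs (|x k|), MeasureTheory.AEEqFun.coeFn_abs (x k)]
      with ω h1 h2
    rw [h1, h2, abs_abs]
  refine X.nrm_mono _ _ hmemg ?_
  rw [← MeasureTheory.AEEqFun.coeFn_le]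
  have hsm : ∀ᵐ ω ∂μ, ∀ k, (β k • x k) ω = β k * x k ω := by
    rw [MeasureTheory.ae_all_iff]
    intro k
    filter_upwards [MeasureTheory.AEEqFun.coeFn_smul (β k) (x k)] with ω h
    simpa using h
  have hab : ∀ᵐ ω ∂μ, ∀ k, (|x k| : Ω →ₘ[μ] ℝ) ω = |x k ω| := by
    rw [MeasureTheory.ae_all_iff]
    intro k
    filter_upwards [MeasureTheory.AEEqFun.coeFn_abs (x k)] with ω h
    simpa using h
  filter_upwards [MeasureTheory.AEEqFun.coeFn_abs (pSum p fun k => β k • x k),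
    MeasureTheory.AEEqFun.coeFn_abs (∑ k, |x k|),
    (by unfold pSum; exact MeasureTheory.AEEqFun.coeFn_mk _ _ :
      ⇑(pSum p fun k => β k • x k) =ᵐ[μ] fun ω => (∑ k, |(β k • x k) ω| ^ p) ^ p⁻¹),
    aux_coeFn_sum Finset.univ (fun k => |x k|), hsm, hab] with ω h1 h2 h3 h4 h5 h6
  rw [h1, h2]
  rw [h3, h4]
  have hsum_ab : ∀ k ∈ Finset.univ, (0:ℝ) ≤ |β k * x k ω| := fun k _ => abs_nonneg _
  have hnn : (0:ℝ) ≤ (∑ k, |β k * x k ω| ^ p) ^ p⁻¹ :=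
    Real.rpow_nonneg (Finset.sum_nonneg fun k _ => Real.rpow_nonneg (abs_nonneg _) _) _
  have hstep : (∑ k, |β k * x k ω| ^ p) ^ p⁻¹ ≤ ∑ k, |x k ω| := by
    calc (∑ k, |β k * x k ω| ^ p) ^ p⁻¹ ≤ ∑ k, |β k * x k ω| :=
          aux_lp_le_l1 Finset.univ _ hsum_ab hp
      _ ≤ ∑ k, |x k ω| := by
          refine Finset.sum_le_sum fun k _ => ?_
          rw [abs_mul]
          calc |β k| * |x k ω| ≤ 1 * |x k ω| :=
                mul_le_mul_of_nonneg_right (hb1 k) (abs_nonneg _)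
            _ = |x k ω| := one_mul _
  have hrw : ∀ k, |(β k • x k) ω| ^ p = |β k * x k ω| ^ p := fun k => by rw [h5 k]
  rw [Finset.sum_congr rfl fun k _ => hrw k]
  have h2' : ∑ k, (|x k| : Ω →ₘ[μ] ℝ) ω = ∑ k, |x k ω| :=
    Finset.sum_congr rfl fun k _ => h6 k
  rw [abs_of_nonneg hnn, h2']
  exact hstep.trans (le_abs_self _)

end MyAux


/-- if `X` is a `p`-concave Banach function lattice with concavity
constant `C` and `1 ≤ p ≤ q`, then the identity map of `X` is `p`-strongly `q`-concave
with constant `C`. -/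
theorem statement14 {Ω : Type} [MeasurableSpace Ω] (μ : Measure Ω) [SigmaFinite μ]
    (X : BFL Ω μ) (p q C : ℝ) (hp : 1 ≤ p) (hpq : p ≤ q)
    (hconc : X.pConcave p C) :
    ∀ (n : ℕ) (x : Fin n → (Ω →ₘ[μ] ℝ)), (∀ k, X.mem (x k)) →
      (∑ k, X.nrm (x k) ^ q) ^ q⁻¹ ≤ C * strongSup X.nrm p q x := by
  intro n x hx
  classical
  have hp0 : (0:ℝ) < p := lt_of_lt_of_le zero_lt_one hp
  have hq0 : (0:ℝ) < q := lt_of_lt_of_le hp0 hpq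
  set t : Fin n → ℝ := fun k => X.nrm (x k) with ht
  set S : ℝ := ∑ k, t k ^ q with hSdef
  have ht0 : ∀ k, 0 ≤ t k := fun k => X.nrm_nonneg _
  have hS0 : 0 ≤ S := Finset.sum_nonneg fun k _ => Real.rpow_nonneg (ht0 k) _
  have hne : Nonempty ↥(strongBall p q n) := ⟨⟨0, aux_zero_mem_strongBall hp0 hpq n⟩⟩
  by_cases hS : S = 0
  · -- degenerate case: all the `x k` vanish
    have htk : ∀ k, t k = 0 := by
      intro k
      have h1 : t k ^ q = 0 :=
        (Finset.sum_eq_zero_iff_of_nonneg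
          (fun k _ => Real.rpow_nonneg (ht0 k) q)).1 hS k (Finset.mem_univ k)
      exact ((Real.rpow_eq_zero_iff_of_nonneg (ht0 k)).1 h1).1
    have hx0 : ∀ k, x k = 0 := fun k => X.nrm_eq_zero _ (hx k) (htk k)
    have hsup : strongSup X.nrm p q x = 0 := by
      unfold strongSup
      have hfun : (fun β : ↥(strongBall p q n) => X.nrm (pSum p fun k => β.1 k • x k)) =
          fun _ => (0:ℝ) := by
        funext β
        have hfam : (fun k => β.1 k • x k) = fun _ : Fin n => (0 : Ω →ₘ[μ] ℝ) :=
          funext fun k => by rw [hx0 k, smul_zero]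
        rw [hfam]
        have hzero : pSum p (fun _ : Fin n => (0 : Ω →ₘ[μ] ℝ)) = 0 := by
          apply MeasureTheory.AEEqFun.ext
          unfold pSum
          filter_upwards [MeasureTheory.AEEqFun.coeFn_mk
              (fun ω => (∑ _k : Fin n, |(0 : Ω →ₘ[μ] ℝ) ω| ^ p) ^ p⁻¹) _,
            MeasureTheory.AEEqFun.coeFn_zero (β := ℝ) (μ := μ)] with ω h1 h2
          have h2' : (0 : Ω →ₘ[μ] ℝ) ω = 0 := by simpa using h2
          rw [h1]
          simp [h2', abs_zero, Real.zero_rpow hp0.ne',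
            Real.zero_rpow (inv_ne_zero hp0.ne')]
        rw [hzero, aux_nrm_zero]
      rw [hfun]
      exact ciSup_const
    rw [hS, hsup, Real.zero_rpow (inv_ne_zero hq0.ne'), mul_zero]
  · have hSpos : 0 < S := lt_of_le_of_ne hS0 (Ne.symm hS)
    obtain ⟨β, hball, hβ0, hkey⟩ :
        ∃ β : Fin n → ℝ, β ∈ strongBall p q n ∧ (∀ k, 0 ≤ β k) ∧
          ∑ k, (β k * t k) ^ p = S ^ (p / q) := by
      by_cases hpq' : p = q
      · refine ⟨fun _ => 1, ?_, fun _ => zero_le_one, ?_⟩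
        · unfold strongBall
          rw [Set.mem_setOf_eq, if_pos hpq']
          intro k; simp
        · subst hpq'
          rw [div_self hp0.ne', Real.rpow_one]
          simp
          exact hSdef.symm
      · have hlt : p < q := lt_of_le_of_ne hpq hpq'
        have hs0 : (0:ℝ) < 1/p - 1/q := by
          rw [sub_pos]; exact one_div_lt_one_div_of_lt hp0 hlt
        have hdiv : ∀ k, (0:ℝ) ≤ t k ^ q / S :=
          fun k => div_nonneg (Real.rpow_nonneg (ht0 k) _) hS0
        refine ⟨fun k => (t k ^ q / S) ^ (1/p - 1/q), ?_, 
          fun k => Real.rpow_nonneg (hdiv k) _, ?_⟩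
        · unfold strongBall
          rw [Set.mem_setOf_eq, if_neg hpq']
          have habs : ∀ k : Fin n, |(t k ^ q / S) ^ (1/p - 1/q)| ^ (1/p - 1/q)⁻¹ = t k ^ q / S := by
            intro k
            rw [abs_of_nonneg (Real.rpow_nonneg (hdiv k) _),
              ← Real.rpow_mul (hdiv k), mul_inv_cancel₀ hs0.ne', Real.rpow_one]
          rw [Finset.sum_congr rfl fun k _ => habs k, ← Finset.sum_div, ← hSdef,
            div_self hSpos.ne']
        · have hterm : ∀ k : Fin n,
              ((t k ^ q / S) ^ (1/p - 1/q) * t k) ^ p = t k ^ q / S ^ ((1/p - 1/q) * p) := by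
            intro k
            rcases (ht0 k).eq_or_lt with h | h
            · rw [← h, Real.zero_rpow hq0.ne', zero_div, Real.zero_rpow hs0.ne', zero_mul,
                Real.zero_rpow hp0.ne', zero_div]
            · have hexp : q * ((1/p - 1/q) * p) + p = q := by
                field_simp
                ring
            
              rw [Real.mul_rpow (Real.rpow_nonneg (by positivity) _) h.le,
                ← Real.rpow_mul (by positivity),
                Real.div_rpow (Real.rpow_nonneg (ht0 k) q) hS0,
                ← Real.rpow_mul (ht0 k), div_mul_eq_mul_div, ← Real.rpow_add h, hexp]
          rw [Finset.sum_congr rfl fun k _ => hterm k, ← Finset.sum_div, ← hSdef]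
          have e : p/q = 1 - (1/p - 1/q) * p := by
            field_simp
            ring
          rw [e, Real.rpow_sub hSpos, Real.rpow_one]
    have hmem' : ∀ k, X.mem (β k • x k) := fun k => X.smul_mem _ _ (hx k)
    have hcon := hconc n (fun k => β k • x k) hmem'
    have hnrm : ∀ k, X.nrm (β k • x k) = β k * t k := by
      intro k
      rw [X.nrm_smul _ _ (hx k), abs_of_nonneg (hβ0 k)]
    have hLHS : (∑ k, X.nrm (β k • x k) ^ p) ^ p⁻¹ = S ^ q⁻¹ := by
      rw [Finset.sum_congr rfl fun k _ => by rw [hnrm k], hkey, ← Real.rpow_mul hS0]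
      congr 1
      field_simp
    beta_reduce at hcon
    rw [hLHS] at hcon
    have hSq : 0 < S ^ q⁻¹ := Real.rpow_pos_of_pos hSpos _
    have hnnn : 0 ≤ X.nrm (pSum p fun k => β k • x k) := X.nrm_nonneg _
    have hC : 0 ≤ C := by nlinarith [hcon, hSq, hnnn]
    have hbdd : BddAbove (Set.range fun β : ↥(strongBall p q n) =>
        X.nrm (pSum p fun k => β.1 k • x k)) := by
      refine ⟨X.nrm (∑ k, |x k|), ?_⟩
      rintro y ⟨γ, rfl⟩
      exact aux_pSum_nrm_le X hp hpq x hx γ.2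
    have hle : X.nrm (pSum p fun k => β k • x k) ≤ strongSup X.nrm p q x := by
      unfold strongSup
      exact le_ciSup hbdd (⟨β, hball⟩ : ↥(strongBall p q n))
    calc S ^ q⁻¹ ≤ C * X.nrm (pSum p fun k => β k • x k) := hcon
      _ ≤ C * strongSup X.nrm p q x := mul_le_mul_of_nonneg_left hle hC


end
end

section
/- Let 1 < p < q < ∞ with 1/r = 1/p − 1/q, let (Ω, Σ, μ) be a σ-finite measure space possessing a measurable partition (A_k)_{k=1}^∞ of Ω with μ(A_k) = 1 for every k, and let Y := { f ∈ L^0(μ) : ( ∫_{A_k} |f|^p dμ )_k ∈ ℓ^{q/p} } with norm ‖f‖_Y := ( ∑_{k=1}^∞ ( ∫_{A_k} |f|^p dμ )^{q/p} )^{1/q}. Then the linear map R(f) := ( 2^{−k/q} ∫_{A_k} f dμ )_{k=1}^∞ satisfies ‖R(f)‖_{ℓ^q} ≤ ‖f‖_Y for all f ∈ Y (so R : Y → ℓ^q is bounded), and R is p-strongly q-concave with constant 1: for all f_1, …, f_n ∈ Y, ∑_{k=1}^n ‖R(f_k)‖_{ℓ^q}^q ≤ sup_{(β_k) ∈ B_r^n}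 ‖ ( ∑_{k=1}^n |β_k f_k|^p )^{1/p} ‖_Y^q. -/
open MeasureTheory Filter

noncomputable section

open scoped ENNReal NNReal

theorem aux_holder {Ω : Type} [MeasurableSpace Ω] {μ : Measure Ω} {p : ℝ} (hp : 1 < p)
    {S : Set Ω} (hS1 : μ S = 1) (f : Ω →ₘ[μ] ℝ) :
    ENNReal.ofReal |∫ ω in S, f ω ∂μ| ≤ (∫⁻ ω in S, ENNReal.ofReal (|f ω| ^ p) ∂μ) ^ p⁻¹ := by
  have hp0 : (0:ℝ) < p := lt_trans one_pos hp
  have hconj : p.HolderConjugate (Real.conjExponent p) := Real.HolderConjugate.conjExponent hp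
  have hmeas : AEMeasurable (fun ω => ENNReal.ofReal |f ω|) (μ.restrict S) :=
    (measurable_abs.comp_aemeasurable f.aemeasurable).ennreal_ofReal.restrict
  have h1 : ENNReal.ofReal |∫ ω in S, f ω ∂μ| ≤ ∫⁻ ω in S, ENNReal.ofReal |f ω| ∂μ := by
    rw [← Real.enorm_eq_ofReal_abs]
    simp_rw [← Real.enorm_eq_ofReal_abs]
    exact enorm_integral_le_lintegral_enorm _
  have h2 : (∫⁻ ω in S, ENNReal.ofReal |f ω| ∂μ) ≤
      (∫⁻ ω in S, ENNReal.ofReal (|f ω| ^ p) ∂μ) ^ p⁻¹ := by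
    have h := ENNReal.lintegral_mul_le_Lp_mul_Lq (μ.restrict S) hconj hmeas
      (g := fun _ => (1:ℝ≥0∞)) aemeasurable_const
    simp only [Pi.mul_apply, mul_one, ENNReal.one_rpow, lintegral_one,
      Measure.restrict_apply_univ, hS1, one_div] at h
    calc (∫⁻ ω in S, ENNReal.ofReal |f ω| ∂μ)
        ≤ (∫⁻ ω in S, ENNReal.ofReal |f ω| ^ p ∂μ) ^ p⁻¹ := h
      _ = (∫⁻ ω in S, ENNReal.ofReal (|f ω| ^ p) ∂μ) ^ p⁻¹ := by
          congr 1
          exact lintegral_congr fun ω => by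
            rw [ENNReal.ofReal_rpow_of_nonneg (abs_nonneg _) (le_of_lt hp0)]
  exact h1.trans h2

theorem aux_pSum_lintegral {Ω : Type} [MeasurableSpace Ω] {μ : Measure Ω} {p : ℝ} (hp0 : 0 < p)
    {n : ℕ} (f : Fin n → (Ω →ₘ[μ] ℝ)) (β : Fin n → ℝ) (S : Set Ω) :
    ∫⁻ ω in S, ENNReal.ofReal (|(pSum p fun i => β i • f i) ω| ^ p) ∂μ
      = ∑ i, ENNReal.ofReal (|β i| ^ p) * ∫⁻ ω in S, ENNReal.ofReal (|f i ω| ^ p) ∂μ := by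
  have hae : ∀ᵐ ω ∂μ, ENNReal.ofReal (|(pSum p fun i => β i • f i) ω| ^ p)
      = ∑ i, ENNReal.ofReal (|β i| ^ p) * ENNReal.ofReal (|f i ω| ^ p) := by
    have hmk : ∀ᵐ ω ∂μ, (pSum p fun i => β i • f i) ω
        = (∑ i, |(β i • f i) ω| ^ p) ^ p⁻¹ := AEEqFun.coeFn_mk _ _
    have hsm : ∀ᵐ ω ∂μ, ∀ i, (β i • f i) ω = β i * f i ω :=
      ae_all_iff.2 fun i => (AEEqFun.coeFn_smul (β i) (f i)).mono fun ω h => by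
        simpa [smul_eq_mul] using h
    filter_upwards [hmk, hsm] with ω h1 h2
    have hsum : (0:ℝ) ≤ ∑ i, |β i * f i ω| ^ p :=
      Finset.sum_nonneg fun i _ => Real.rpow_nonneg (abs_nonneg _) p
    rw [h1]
    simp_rw [h2]
    rw [abs_of_nonneg (Real.rpow_nonneg hsum p⁻¹), ← Real.rpow_mul hsum,
      inv_mul_cancel₀ (ne_of_gt hp0), Real.rpow_one,
      ENNReal.ofReal_sum_of_nonneg (fun i _ => Real.rpow_nonneg (abs_nonneg _) p)]
    congr 1
    ext i
    rw [abs_mul, Real.mul_rpow (abs_nonneg _) (abs_nonneg _), ENNReal.ofReal_mul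
      (Real.rpow_nonneg (abs_nonneg _) p)]
  have hm : ∀ i : Fin n, AEMeasurable (fun ω => ENNReal.ofReal (|f i ω| ^ p)) (μ.restrict S) := by
    intro i
    exact ((measurable_abs.comp_aemeasurable (f i).aemeasurable).pow
      aemeasurable_const).ennreal_ofReal.restrict
  rw [lintegral_congr_ae (ae_restrict_of_ae hae),
    lintegral_finset_sum' _ (fun i _ => (hm i).const_mul _)]
  exact Finset.sum_congr rfl fun i _ => lintegral_const_mul'' _ (hm i)

theorem aux_beta_sum {n : ℕ} (c : Fin n → ℝ) {p q : ℝ} (hp : 1 < p) (hpq : p < q)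
    (hC : 0 < ∑ j, |c j| ^ q) :
    ∑ i, |(|c i| ^ q / ∑ j, |c j| ^ q) ^ (1/p - 1/q)| ^ p * |c i| ^ p
      = (∑ j, |c j| ^ q) ^ (p / q) := by
  have hp0 : (0:ℝ) < p := lt_trans one_pos hp
  have hq0 : (0:ℝ) < q := lt_trans hp0 hpq
  set C := ∑ j, |c j| ^ q with hCdef
  have hterm : ∀ i, |(|c i| ^ q / C) ^ (1/p - 1/q)| ^ p * |c i| ^ p
      = |c i| ^ q / C ^ (1 - p/q) := by
    intro i
    have ht0 : (0:ℝ) ≤ |c i| ^ q / C := div_nonneg (Real.rpow_nonneg (abs_nonneg _) q) hC.le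
    rw [abs_of_nonneg (Real.rpow_nonneg ht0 _), ← Real.rpow_mul ht0]
    have hep : (1/p - 1/q) * p = 1 - p/q := by field_simp
    rw [hep, Real.div_rpow (Real.rpow_nonneg (abs_nonneg _) q) hC.le,
      ← Real.rpow_mul (abs_nonneg _)]
    have hqq : q * (1 - p/q) = q - p := by field_simp
    rw [hqq, div_mul_eq_mul_div, ← Real.rpow_add' (abs_nonneg _) (by rw [sub_add_cancel]; exact ne_of_gt hq0), sub_add_cancel]
  calc ∑ i, |(|c i| ^ q / C) ^ (1/p - 1/q)| ^ p * |c i| ^ p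
      = ∑ i, |c i| ^ q / C ^ (1 - p/q) := Finset.sum_congr rfl fun i _ => hterm i
    _ = C / C ^ (1 - p/q) := by rw [← Finset.sum_div]
    _ = C ^ (p / q) := by
        rw [show (p/q : ℝ) = 1 - (1 - p/q) by ring, Real.rpow_sub hC, Real.rpow_one]
        have hXpos : (0:ℝ) < C ^ (1 - (1 - p / q)) := Real.rpow_pos_of_pos hC _
        field_simp


/-- for `1 < p < q` and a σ-finite measure space with a measurable
partition `(A_k)` of measure-one sets, let `Y` be the space with norm
`‖f‖_Y = (∑_k (∫_{A_k} |f|^p dμ)^{q/p})^{1/q}`. Then the evaluation map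
`R f = (2^{-k/q} ∫_{A_k} f dμ)_k` satisfies `‖R f‖_{ℓ^q} ≤ ‖f‖_Y` for `f ∈ Y`, and `R`
is `p`-strongly `q`-concave with constant 1 (the inequalities are stated with the
`ℓ^q`-norms raised to the power `q`, in `ℝ≥0∞`). -/
theorem statement15 {Ω : Type} [MeasurableSpace Ω] (μ : Measure Ω) [SigmaFinite μ]
    (p q : ℝ) (hp : 1 < p) (hpq : p < q)
    (A : ℕ → Set Ω) (hAm : ∀ k, MeasurableSet (A k))
    (hAdisj : Pairwise (Function.onFun Disjoint A)) (hAcover : (⋃ k, A k) = Set.univ)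
    (hA1 : ∀ k, μ (A k) = 1) :
    (∀ f : Ω →ₘ[μ] ℝ,
      (∑' k : ℕ, (∫⁻ ω in A k, ENNReal.ofReal (|f ω| ^ p) ∂μ) ^ (q / p)) < ⊤ →
      (∑' k : ℕ,
          (ENNReal.ofReal |(2 : ℝ) ^ (-((k : ℝ) + 1) / q) * ∫ ω in A k, f ω ∂μ|) ^ q) ≤
        ∑' k : ℕ, (∫⁻ ω in A k, ENNReal.ofReal (|f ω| ^ p) ∂μ) ^ (q / p)) ∧
    (∀ (n : ℕ) (f : Fin n → (Ω →ₘ[μ] ℝ)),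
      (∀ i, (∑' k : ℕ, (∫⁻ ω in A k, ENNReal.ofReal (|f i ω| ^ p) ∂μ) ^ (q / p)) < ⊤) →
      (∑ i, ∑' k : ℕ,
          (ENNReal.ofReal |(2 : ℝ) ^ (-((k : ℝ) + 1) / q) * ∫ ω in A k, f i ω ∂μ|) ^ q) ≤
        ENNReal.ofReal
          ((strongSup
              (fun g =>
                ((∑' k : ℕ, (∫⁻ ω in A k, ENNReal.ofReal (|g ω| ^ p) ∂μ) ^ (q / p)) ^
                    q⁻¹).toReal)
              p q f) ^ q)) := by
  have hp0 : (0:ℝ) < p := lt_trans one_pos hp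
  have hq0 : (0:ℝ) < q := lt_trans hp0 hpq
  have hs0 : (0:ℝ) < q / p := div_pos hq0 hp0
  have he : (0:ℝ) < 1/p - 1/q := by
    rw [sub_pos]
    exact one_div_lt_one_div_of_lt hp0 hpq
  have key1q : ∀ (g : Ω →ₘ[μ] ℝ) (k : ℕ),
      (ENNReal.ofReal |∫ ω in A k, g ω ∂μ|) ^ q
        ≤ (∫⁻ ω in A k, ENNReal.ofReal (|g ω| ^ p) ∂μ) ^ (q / p) := by
    intro g k
    have h := ENNReal.rpow_le_rpow (aux_holder hp (hA1 k) g) hq0.le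
    rwa [← ENNReal.rpow_mul, inv_mul_eq_div] at h
  have hsplit : ∀ (g : Ω →ₘ[μ] ℝ) (k : ℕ),
      ENNReal.ofReal |(2:ℝ) ^ (-((k:ℝ)+1)/q) * ∫ ω in A k, g ω ∂μ| ^ q
        = (2:ℝ≥0∞) ^ (-((k:ℝ)+1)) * (ENNReal.ofReal |∫ ω in A k, g ω ∂μ|) ^ q := by
    intro g k
    rw [abs_mul, ENNReal.ofReal_mul (abs_nonneg _), ENNReal.mul_rpow_of_nonneg _ _ hq0.le,
      abs_of_pos (Real.rpow_pos_of_pos two_pos _), ← ENNReal.ofReal_rpow_of_pos two_pos,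
      ← ENNReal.rpow_mul, div_mul_cancel₀ _ (ne_of_gt hq0)]
    norm_num
  have hF1 : ∀ k : ℕ, (2:ℝ≥0∞) ^ (-((k:ℝ)+1)) ≤ 1 := by
    intro k
    rw [ENNReal.rpow_neg, show ((k:ℝ)+1) = (((k+1:ℕ)):ℝ) by push_cast; ring,
      ENNReal.rpow_natCast]
    rw [ENNReal.inv_le_one]
    exact one_le_pow_of_one_le' (by norm_num : (1:ℝ≥0∞) ≤ 2) _
  have hFsum : (∑' k : ℕ, (2:ℝ≥0∞) ^ (-((k:ℝ)+1))) = 1 := by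
    have h2 : ∀ k : ℕ, (2:ℝ≥0∞) ^ (-((k:ℝ)+1)) = 2⁻¹ * (2⁻¹) ^ k := by
      intro k
      rw [show -((k:ℝ)+1) = -(((k+1:ℕ)):ℝ) by push_cast; ring, ENNReal.rpow_neg,
        ENNReal.rpow_natCast, ENNReal.inv_pow, pow_succ']
    simp_rw [h2]
    rw [ENNReal.tsum_mul_left, ENNReal.tsum_geometric, ENNReal.one_sub_inv_two, inv_inv]
    exact ENNReal.inv_mul_cancel (by norm_num) (by norm_num)
  constructor
  · intro f _
    refine ENNReal.tsum_le_tsum fun k => ?_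
    calc ENNReal.ofReal |(2:ℝ) ^ (-((k:ℝ)+1)/q) * ∫ ω in A k, f ω ∂μ| ^ q
        = (2:ℝ≥0∞) ^ (-((k:ℝ)+1)) * (ENNReal.ofReal |∫ ω in A k, f ω ∂μ|) ^ q := hsplit f k
      _ ≤ 1 * (∫⁻ ω in A k, ENNReal.ofReal (|f ω| ^ p) ∂μ) ^ (q / p) :=
          mul_le_mul' (hF1 k) (key1q f k)
      _ = _ := one_mul _
  · intro n f hfin
    set nrm : (Ω →ₘ[μ] ℝ) → ℝ := fun g =>
      ((∑' k : ℕ, (∫⁻ ω in A k, ENNReal.ofReal (|g ω| ^ p) ∂μ) ^ (q / p)) ^ q⁻¹).toReal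
      with hnrmdef
    have hβ1 : ∀ β : Fin n → ℝ, β ∈ strongBall p q n → ∀ i, |β i| ≤ 1 := by
      intro β hβ i
      rw [strongBall, Set.mem_setOf_eq, if_neg (ne_of_lt hpq)] at hβ
      by_contra hcon
      push_neg at hcon
      have h1 : |β i| ^ (1/p - 1/q)⁻¹ ≤ 1 :=
        le_trans (Finset.single_le_sum (f := fun j => |β j| ^ (1/p - 1/q)⁻¹)
          (fun j _ => Real.rpow_nonneg (abs_nonneg _) _) (Finset.mem_univ i)) hβ
      have h2 : 1 < |β i| ^ (1/p - 1/q)⁻¹ :=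
        (Real.one_lt_rpow_iff_of_pos (lt_trans one_pos hcon)).2 (Or.inl ⟨hcon, inv_pos.2 he⟩)
      linarith
    have hIntEq : ∀ (β : Fin n → ℝ) (k : ℕ),
        ∫⁻ ω in A k, ENNReal.ofReal (|(pSum p fun i => β i • f i) ω| ^ p) ∂μ
          = ∑ i, ENNReal.ofReal (|β i| ^ p) * ∫⁻ ω in A k, ENNReal.ofReal (|f i ω| ^ p) ∂μ :=
      fun β k => aux_pSum_lintegral hp0 f β (A k)
    have hD : (∑' k : ℕ, (∑ i, ∫⁻ ω in A k, ENNReal.ofReal (|f i ω| ^ p) ∂μ) ^ (q/p)) ≠ ⊤ := by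
      have hbound : ∀ k : ℕ, (∑ i, ∫⁻ ω in A k, ENNReal.ofReal (|f i ω| ^ p) ∂μ) ^ (q/p)
          ≤ (n:ℝ≥0∞) ^ (q/p) * ∑ i, (∫⁻ ω in A k, ENNReal.ofReal (|f i ω| ^ p) ∂μ) ^ (q/p) := by
        intro k
        have hle : ∀ i : Fin n, (∫⁻ ω in A k, ENNReal.ofReal (|f i ω| ^ p) ∂μ)
            ≤ (∑ j, (∫⁻ ω in A k, ENNReal.ofReal (|f j ω| ^ p) ∂μ) ^ (q/p)) ^ (q/p)⁻¹ := by
          intro i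
          have h1 : (∫⁻ ω in A k, ENNReal.ofReal (|f i ω| ^ p) ∂μ) ^ (q/p)
              ≤ ∑ j, (∫⁻ ω in A k, ENNReal.ofReal (|f j ω| ^ p) ∂μ) ^ (q/p) :=
            Finset.single_le_sum
              (f := fun j => (∫⁻ ω in A k, ENNReal.ofReal (|f j ω| ^ p) ∂μ) ^ (q/p))
              (fun j _ => zero_le) (Finset.mem_univ i)
          have h2 := ENNReal.rpow_le_rpow h1 (inv_nonneg.2 hs0.le)
          rwa [← ENNReal.rpow_mul, mul_inv_cancel₀ (ne_of_gt hs0), ENNReal.rpow_one] at h2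
        have hsum : (∑ i, ∫⁻ ω in A k, ENNReal.ofReal (|f i ω| ^ p) ∂μ)
            ≤ (n:ℝ≥0∞) * (∑ j, (∫⁻ ω in A k, ENNReal.ofReal (|f j ω| ^ p) ∂μ) ^ (q/p)) ^ (q/p)⁻¹ := by
          calc (∑ i, ∫⁻ ω in A k, ENNReal.ofReal (|f i ω| ^ p) ∂μ)
              ≤ ∑ _i : Fin n, (∑ j, (∫⁻ ω in A k, ENNReal.ofReal (|f j ω| ^ p) ∂μ) ^ (q/p)) ^ (q/p)⁻¹ :=
                Finset.sum_le_sum fun i _ => hle i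
            _ = (n:ℝ≥0∞) * (∑ j, (∫⁻ ω in A k, ENNReal.ofReal (|f j ω| ^ p) ∂μ) ^ (q/p)) ^ (q/p)⁻¹ := by
                rw [Finset.sum_const, Finset.card_univ, Fintype.card_fin, nsmul_eq_mul]
        calc (∑ i, ∫⁻ ω in A k, ENNReal.ofReal (|f i ω| ^ p) ∂μ) ^ (q/p)
            ≤ ((n:ℝ≥0∞) * (∑ j, (∫⁻ ω in A k, ENNReal.ofReal (|f j ω| ^ p) ∂μ) ^ (q/p)) ^ (q/p)⁻¹) ^ (q/p) :=
              ENNReal.rpow_le_rpow hsum hs0.le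
          _ = (n:ℝ≥0∞) ^ (q/p) * ∑ j, (∫⁻ ω in A k, ENNReal.ofReal (|f j ω| ^ p) ∂μ) ^ (q/p) := by
              rw [ENNReal.mul_rpow_of_nonneg _ _ hs0.le, ← ENNReal.rpow_mul,
                inv_mul_cancel₀ (ne_of_gt hs0), ENNReal.rpow_one]
      have h2 : (∑' k : ℕ, (∑ i, ∫⁻ ω in A k, ENNReal.ofReal (|f i ω| ^ p) ∂μ) ^ (q/p))
          ≤ (n:ℝ≥0∞) ^ (q/p) * ∑ i, ∑' k : ℕ, (∫⁻ ω in A k, ENNReal.ofReal (|f i ω| ^ p) ∂μ) ^ (q/p) := by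
        calc (∑' k : ℕ, (∑ i, ∫⁻ ω in A k, ENNReal.ofReal (|f i ω| ^ p) ∂μ) ^ (q/p))
            ≤ ∑' k : ℕ, (n:ℝ≥0∞) ^ (q/p) * ∑ i, (∫⁻ ω in A k, ENNReal.ofReal (|f i ω| ^ p) ∂μ) ^ (q/p) :=
              ENNReal.tsum_le_tsum hbound
          _ = (n:ℝ≥0∞) ^ (q/p) * ∑' k : ℕ, ∑ i, (∫⁻ ω in A k, ENNReal.ofReal (|f i ω| ^ p) ∂μ) ^ (q/p) :=
              ENNReal.tsum_mul_left
          _ = (n:ℝ≥0∞) ^ (q/p) * ∑ i, ∑' k : ℕ, (∫⁻ ω in A k, ENNReal.ofReal (|f i ω| ^ p) ∂μ) ^ (q/p) := by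
              rw [Summable.tsum_finsetSum (fun i _ => ENNReal.summable)]
      refine ne_of_lt (lt_of_le_of_lt h2 ?_)
      refine ENNReal.mul_lt_top ?_ ?_
      · exact ENNReal.rpow_lt_top_of_nonneg hs0.le (ENNReal.natCast_ne_top n)
      · exact ENNReal.sum_lt_top.2 fun i _ => (hfin i)
    have hEle : ∀ β : Fin n → ℝ, (∀ i, |β i| ≤ 1) →
        (∑' k : ℕ, (∫⁻ ω in A k, ENNReal.ofReal (|(pSum p fun i => β i • f i) ω| ^ p) ∂μ) ^ (q/p))
          ≤ ∑' k : ℕ, (∑ i, ∫⁻ ω in A k, ENNReal.ofReal (|f i ω| ^ p) ∂μ) ^ (q/p) := by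
      intro β hβ
      refine ENNReal.tsum_le_tsum fun k => ?_
      refine ENNReal.rpow_le_rpow ?_ hs0.le
      rw [hIntEq β k]
      refine Finset.sum_le_sum fun i _ => ?_
      calc ENNReal.ofReal (|β i| ^ p) * ∫⁻ ω in A k, ENNReal.ofReal (|f i ω| ^ p) ∂μ
          ≤ 1 * ∫⁻ ω in A k, ENNReal.ofReal (|f i ω| ^ p) ∂μ := by
            apply mul_le_mul_left
            refine le_trans (ENNReal.ofReal_le_ofReal
              (Real.rpow_le_one (abs_nonneg _) (hβ i) hp0.le)) (by simp)
        _ = _ := one_mul _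
    have hBdd : BddAbove (Set.range fun β : strongBall p q n =>
        nrm (pSum p fun i => β.1 i • f i)) := by
      refine ⟨((∑' k : ℕ, (∑ i, ∫⁻ ω in A k, ENNReal.ofReal (|f i ω| ^ p) ∂μ) ^ (q/p)) ^ q⁻¹).toReal, ?_⟩
      rintro x ⟨⟨β, hβ⟩, rfl⟩
      apply ENNReal.toReal_mono
      · exact ENNReal.rpow_ne_top_of_nonneg (inv_nonneg.2 hq0.le) hD
      · exact ENNReal.rpow_le_rpow (hEle β (hβ1 β hβ)) (inv_nonneg.2 hq0.le)
    have hMain : ∀ k : ℕ, (∑ i, (ENNReal.ofReal |∫ ω in A k, f i ω ∂μ|) ^ q)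
        ≤ ENNReal.ofReal ((strongSup nrm p q f) ^ q) := by
      intro k
      by_cases hC : (∑ i, |∫ ω in A k, f i ω ∂μ| ^ q) = 0
      · have hz : ∀ i : Fin n, |∫ ω in A k, f i ω ∂μ| = 0 := by
          intro i
          have h := (Finset.sum_eq_zero_iff_of_nonneg
            (fun j _ => Real.rpow_nonneg (abs_nonneg _) q)).1 hC i (Finset.mem_univ i)
          by_contra hne
          have hpos : 0 < |∫ ω in A k, f i ω ∂μ| := lt_of_le_of_ne (abs_nonneg _) (Ne.symm hne)
          exact absurd h (ne_of_gt (Real.rpow_pos_of_pos hpos q))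
        calc (∑ i, (ENNReal.ofReal |∫ ω in A k, f i ω ∂μ|) ^ q) = 0 := by
              refine Finset.sum_eq_zero fun i _ => ?_
              rw [hz i]
              simp [ENNReal.zero_rpow_of_pos hq0]
          _ ≤ _ := zero_le
      · have hCpos : 0 < ∑ i, |∫ ω in A k, f i ω ∂μ| ^ q :=
          lt_of_le_of_ne (Finset.sum_nonneg fun i _ => Real.rpow_nonneg (abs_nonneg _) q)
            (Ne.symm hC)
        set β : Fin n → ℝ := fun i =>
          (|∫ ω in A k, f i ω ∂μ| ^ q / ∑ j, |∫ ω in A k, f j ω ∂μ| ^ q) ^ (1/p - 1/q)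
          with hβdef
        have hβmem : β ∈ strongBall p q n := by
          rw [strongBall, Set.mem_setOf_eq, if_neg (ne_of_lt hpq)]
          have hterm : ∀ i : Fin n, |β i| ^ (1/p - 1/q)⁻¹
              = |∫ ω in A k, f i ω ∂μ| ^ q / ∑ j, |∫ ω in A k, f j ω ∂μ| ^ q := by
            intro i
            have ht0 : (0:ℝ) ≤ |∫ ω in A k, f i ω ∂μ| ^ q / ∑ j, |∫ ω in A k, f j ω ∂μ| ^ q :=
              div_nonneg (Real.rpow_nonneg (abs_nonneg _) q) hCpos.le
            rw [hβdef]
            simp only []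
            rw [abs_of_nonneg (Real.rpow_nonneg ht0 _), ← Real.rpow_mul ht0,
              mul_inv_cancel₀ (ne_of_gt he), Real.rpow_one]
          rw [Finset.sum_congr rfl (fun i _ => hterm i), ← Finset.sum_div,
            div_self (ne_of_gt hCpos)]
        have hstep1 : ENNReal.ofReal ((∑ j, |∫ ω in A k, f j ω ∂μ| ^ q) ^ (p/q))
            ≤ ∫⁻ ω in A k, ENNReal.ofReal (|(pSum p fun i => β i • f i) ω| ^ p) ∂μ := by
          rw [hIntEq β k, ← aux_beta_sum (fun i => ∫ ω in A k, f i ω ∂μ) hp hpq hCpos,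
            ENNReal.ofReal_sum_of_nonneg (fun i _ => mul_nonneg
              (Real.rpow_nonneg (abs_nonneg _) _) (Real.rpow_nonneg (abs_nonneg _) _))]
          refine Finset.sum_le_sum fun i _ => ?_
          rw [ENNReal.ofReal_mul (Real.rpow_nonneg (abs_nonneg _) _)]
          apply mul_le_mul_right
          have h1 := aux_holder hp (hA1 k) (f i)
          have h2 := ENNReal.rpow_le_rpow h1 hp0.le
          rwa [← ENNReal.rpow_mul, inv_mul_cancel₀ (ne_of_gt hp0), ENNReal.rpow_one,
            ENNReal.ofReal_rpow_of_nonneg (abs_nonneg _) hp0.le] at h2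
        have hstep2 : (∑ i, (ENNReal.ofReal |∫ ω in A k, f i ω ∂μ|) ^ q)
            ≤ (∫⁻ ω in A k, ENNReal.ofReal (|(pSum p fun i => β i • f i) ω| ^ p) ∂μ) ^ (q/p) := by
          have h := ENNReal.rpow_le_rpow hstep1 hs0.le
          rw [ENNReal.ofReal_rpow_of_nonneg (Real.rpow_nonneg hCpos.le _) hs0.le,
            ← Real.rpow_mul hCpos.le,
            show (p/q) * (q/p) = 1 from by field_simp, Real.rpow_one] at h
          refine le_trans (le_of_eq ?_) h
          rw [ENNReal.ofReal_sum_of_nonneg (fun i _ => Real.rpow_nonneg (abs_nonneg _) q)]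
          exact Finset.sum_congr rfl fun i _ =>
            ENNReal.ofReal_rpow_of_nonneg (abs_nonneg _) hq0.le
        have hE : (∑' k' : ℕ, (∫⁻ ω in A k', ENNReal.ofReal
            (|(pSum p fun i => β i • f i) ω| ^ p) ∂μ) ^ (q/p)) ≠ ⊤ :=
          ne_top_of_le_ne_top hD (hEle β (hβ1 β hβmem))
        have hstep3 : (∑ i, (ENNReal.ofReal |∫ ω in A k, f i ω ∂μ|) ^ q)
            ≤ ENNReal.ofReal (nrm (pSum p fun i => β i • f i) ^ q) := by
          have hterm : (∫⁻ ω in A k, ENNReal.ofReal (|(pSum p fun i => β i • f i) ω| ^ p) ∂μ) ^ (q/p)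
              ≤ ∑' k' : ℕ, (∫⁻ ω in A k', ENNReal.ofReal
                (|(pSum p fun i => β i • f i) ω| ^ p) ∂μ) ^ (q/p) := ENNReal.le_tsum k
          have heq : ENNReal.ofReal (nrm (pSum p fun i => β i • f i) ^ q)
              = ∑' k' : ℕ, (∫⁻ ω in A k', ENNReal.ofReal
                (|(pSum p fun i => β i • f i) ω| ^ p) ∂μ) ^ (q/p) := by
            rw [hnrmdef]
            simp only []
            rw [ENNReal.toReal_rpow, ← ENNReal.rpow_mul, inv_mul_cancel₀ (ne_of_gt hq0),
              ENNReal.rpow_one, ENNReal.ofReal_toReal hE]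
          rw [heq]
          exact le_trans hstep2 hterm
        have hfinal : nrm (pSum p fun i => β i • f i) ≤ strongSup nrm p q f := by
          rw [strongSup]
          exact le_ciSup hBdd ⟨β, hβmem⟩
        calc (∑ i, (ENNReal.ofReal |∫ ω in A k, f i ω ∂μ|) ^ q)
            ≤ ENNReal.ofReal (nrm (pSum p fun i => β i • f i) ^ q) := hstep3
          _ ≤ ENNReal.ofReal ((strongSup nrm p q f) ^ q) :=
              ENNReal.ofReal_le_ofReal
                (Real.rpow_le_rpow ENNReal.toReal_nonneg hfinal hq0.le)
    rw [← Summable.tsum_finsetSum (fun i _ => ENNReal.summable)]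
    refine le_trans (ENNReal.tsum_le_tsum fun k => ?_)
      (le_of_eq (by rw [ENNReal.tsum_mul_right, hFsum, one_mul]))
    calc (∑ i, ENNReal.ofReal |(2:ℝ) ^ (-((k:ℝ)+1)/q) * ∫ ω in A k, f i ω ∂μ| ^ q)
        = ∑ i, (2:ℝ≥0∞) ^ (-((k:ℝ)+1)) * (ENNReal.ofReal |∫ ω in A k, f i ω ∂μ|) ^ q :=
          Finset.sum_congr rfl fun i _ => hsplit (f i) k
      _ = (2:ℝ≥0∞) ^ (-((k:ℝ)+1)) * ∑ i, (ENNReal.ofReal |∫ ω in A k, f i ω ∂μ|) ^ q :=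
          (Finset.mul_sum _ _ _).symm
      _ ≤ (2:ℝ≥0∞) ^ (-((k:ℝ)+1)) * ENNReal.ofReal ((strongSup nrm p q f) ^ q) :=
          mul_le_mul_right (hMain k) _

end
end

section
/- Let ([0,1], B, μ) be the Lebesgue measure space, A_k := [0, 1/2^{k−1}] for k ∈ ℕ, and let T : L^1[0,1] → ℓ^∞ be the integral evaluation operator T(x) := ( ∫_{A_k} x dμ )_{k=1}^∞. Then for every finite sequence x_1, …, x_n ∈ L^1[0,1], inf_{(α_i) ∈ B_2^n, α_i ≠ 0} ‖ sup_{1 ≤ i ≤ n} |T(x_i)| / |α_i| ‖_{ℓ^∞} ≤ sup_{(β_i) ∈ B_2^n} ‖ ∑_{i=1}^n |β_i x_i| ‖_{L^1[0,1]}, where |T(x_i)|/|α_i| and the supremum over i are taken coordinatewise in ℓ^∞. -/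
open MeasureTheory Filter

noncomputable section

/-- the integral evaluation operator `T : L¹[0,1] → ℓ^∞`,
`T x = (∫_{[0,1/2^{k-1}]} x dμ)_k`, satisfies
`inf_{α ∈ B₂ⁿ, αᵢ ≠ 0} ‖sup_i |T xᵢ|/|αᵢ|‖_∞ ≤ sup_{β ∈ B₂ⁿ} ‖∑ᵢ |βᵢ xᵢ|‖_{L¹[0,1]}`
for every finite sequence in `L¹[0,1]`. -/
theorem statement16 (n : ℕ) (x : Fin n → ℝ → ℝ)
    (hx : ∀ i, IntegrableOn (x i) (Set.Icc (0 : ℝ) 1)) :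
    (⨅ α : {α : Fin n → ℝ // (∑ i, (α i) ^ 2 ≤ 1) ∧ ∀ i, α i ≠ 0},
        ⨆ k : ℕ, ⨆ i : Fin n,
          |∫ t in Set.Icc (0 : ℝ) ((1 : ℝ) / 2 ^ k), x i t| / |α.1 i|) ≤
      ⨆ β : {β : Fin n → ℝ // ∑ i, (β i) ^ 2 ≤ 1},
        ∫ t in Set.Icc (0 : ℝ) 1, ∑ i, |β.1 i * x i t| := by
  set b : Fin n → ℝ := fun i => ∫ t in Set.Icc (0 : ℝ) 1, |x i t| with hb
  have hb0 : ∀ i, 0 ≤ b i := fun i =>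
    integral_nonneg fun t => abs_nonneg _
  set S : ℝ := Real.sqrt (∑ i, b i ^ 2) with hS
  have hS0 : 0 ≤ S := Real.sqrt_nonneg _
  have hS2 : S ^ 2 = ∑ i, b i ^ 2 := Real.sq_sqrt (Finset.sum_nonneg fun i _ => sq_nonneg _)
  -- key pointwise bound
  have hkey : ∀ (k : ℕ) (i : Fin n),
      |∫ t in Set.Icc (0 : ℝ) ((1 : ℝ) / 2 ^ k), x i t| ≤ b i := by
    intro k i
    have hsub : Set.Icc (0 : ℝ) ((1 : ℝ) / 2 ^ k) ⊆ Set.Icc (0 : ℝ) 1 := by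
      apply Set.Icc_subset_Icc le_rfl
      rw [div_le_one (by positivity)]
      exact one_le_pow₀ one_le_two
    calc |∫ t in Set.Icc (0 : ℝ) ((1 : ℝ) / 2 ^ k), x i t|
        ≤ ∫ t in Set.Icc (0 : ℝ) ((1 : ℝ) / 2 ^ k), |x i t| := by
          simpa [Real.norm_eq_abs] using
            norm_integral_le_integral_norm (μ := volume.restrict (Set.Icc (0:ℝ) ((1:ℝ)/2^k)))
              (f := x i)
      _ ≤ b i := by
          apply setIntegral_mono_set ((hx i).abs)
            (Eventually.of_forall fun t => abs_nonneg _)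
            (HasSubset.Subset.eventuallyLE hsub)
  -- integral of the sum
  have hInt : ∀ β : Fin n → ℝ,
      (∫ t in Set.Icc (0 : ℝ) 1, ∑ i, |β i * x i t|) = ∑ i, |β i| * b i := by
    intro β
    have : ∀ i ∈ Finset.univ, IntegrableOn (fun t => |β i * x i t|) (Set.Icc (0:ℝ) 1) := by
      intro i _
      simp only [abs_mul]
      exact ((hx i).abs.const_mul _)
    rw [integral_finset_sum _ this]
    refine Finset.sum_congr rfl fun i _ => ?_
    simp only [abs_mul]
    exact integral_const_mul _ _
  -- RHS bounded, and bound for arbitrary β in the ball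
  have hCS : ∀ β : Fin n → ℝ, (∑ i, (β i) ^ 2 ≤ 1) → ∑ i, |β i| * b i ≤ S := by
    intro β hβ
    have h1 : (∑ i, |β i| * b i) ^ 2 ≤ (∑ i, |β i| ^ 2) * ∑ i, b i ^ 2 :=
      Finset.sum_mul_sq_le_sq_mul_sq _ _ _
    have h2 : (∑ i, |β i| ^ 2) ≤ 1 := by simpa [sq_abs] using hβ
    have h3 : (∑ i, |β i| * b i) ^ 2 ≤ S ^ 2 := by
      rw [hS2]
      calc (∑ i, |β i| * b i) ^ 2 ≤ (∑ i, |β i| ^ 2) * ∑ i, b i ^ 2 := h1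
        _ ≤ 1 * ∑ i, b i ^ 2 := by
            apply mul_le_mul_of_nonneg_right h2 (Finset.sum_nonneg fun i _ => sq_nonneg _)
        _ = ∑ i, b i ^ 2 := one_mul _
    have h4 : 0 ≤ ∑ i, |β i| * b i :=
      Finset.sum_nonneg fun i _ => mul_nonneg (abs_nonneg _) (hb0 i)
    calc ∑ i, |β i| * b i = Real.sqrt ((∑ i, |β i| * b i) ^ 2) := (Real.sqrt_sq h4).symm
      _ ≤ Real.sqrt (S ^ 2) := Real.sqrt_le_sqrt h3
      _ = S := Real.sqrt_sq hS0
  have hbdd : BddAbove (Set.range fun β : {β : Fin n → ℝ // ∑ i, (β i) ^ 2 ≤ 1} =>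
      ∫ t in Set.Icc (0 : ℝ) 1, ∑ i, |β.1 i * x i t|) := by
    refine ⟨S, ?_⟩
    rintro _ ⟨β, rfl⟩
    exact (hInt β.1).le.trans (hCS β.1 β.2)
  -- S ≤ RHS
  have hSle : S ≤ ⨆ β : {β : Fin n → ℝ // ∑ i, (β i) ^ 2 ≤ 1},
      ∫ t in Set.Icc (0 : ℝ) 1, ∑ i, |β.1 i * x i t| := by
    have hmem : (∑ i, (fun i => b i / S) i ^ 2) ≤ 1 := by
      rcases eq_or_ne S 0 with h | h
      · simp [h]
      · have : (∑ i, (b i / S) ^ 2) = (∑ i, b i ^ 2) / S ^ 2 := by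
          rw [Finset.sum_div]
          exact Finset.sum_congr rfl fun i _ => div_pow _ _ _
        rw [this, ← hS2, div_self (pow_ne_zero _ h)]
    refine le_trans ?_ (le_ciSup hbdd ⟨fun i => b i / S, hmem⟩)
    rw [hInt]
    have : ∀ i, |b i / S| * b i = b i ^ 2 / S := by
      intro i
      rw [abs_of_nonneg (div_nonneg (hb0 i) hS0)]
      ring
    rw [Finset.sum_congr rfl fun i _ => this i, ← Finset.sum_div, ← hS2]
    rcases eq_or_ne S 0 with h | h
    · simp [h]
    · rw [sq, mul_div_assoc, div_self h, mul_one]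
  -- LHS ≤ S + ε for each ε > 0
  have hLHS : ∀ ε : ℝ, 0 < ε →
      (⨅ α : {α : Fin n → ℝ // (∑ i, (α i) ^ 2 ≤ 1) ∧ ∀ i, α i ≠ 0},
        ⨆ k : ℕ, ⨆ i : Fin n,
          |∫ t in Set.Icc (0 : ℝ) ((1 : ℝ) / 2 ^ k), x i t| / |α.1 i|) ≤ S + ε := by
    intro ε hε
    set δ : ℝ := ε / (Real.sqrt n + 1) with hδdef
    have hδ : 0 < δ := div_pos hε (by positivity)
    set M : ℝ := S + ε with hM
    have hM0 : 0 < M := by positivity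
    set α : Fin n → ℝ := fun i => max (b i) δ / M with hα
    have hαpos : ∀ i, 0 < α i := fun i =>
      div_pos (lt_max_of_lt_right hδ) hM0
    have hαball : ∑ i, (α i) ^ 2 ≤ 1 := by
      have h1 : ∀ i, (α i) ^ 2 = (max (b i) δ) ^ 2 / M ^ 2 := fun i => div_pow _ _ _
      have h2 : ∀ i, (max (b i) δ) ^ 2 ≤ b i ^ 2 + δ ^ 2 := by
        intro i
        rcases max_cases (b i) δ with ⟨h, _⟩ | ⟨h, _⟩ <;> rw [h] <;> nlinarith [sq_nonneg (b i), sq_nonneg δ]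
      have h3 : (n : ℝ) * δ ^ 2 ≤ ε ^ 2 := by
        rw [hδdef, div_pow, ← mul_div_assoc, div_le_iff₀ (by positivity)]
        have hn : (n : ℝ) ≤ (Real.sqrt n + 1) ^ 2 := by
          have : Real.sqrt n ^ 2 = (n : ℝ) := Real.sq_sqrt (Nat.cast_nonneg n)
          nlinarith [Real.sqrt_nonneg (n : ℝ)]
        nlinarith [sq_nonneg ε]
      calc ∑ i, (α i) ^ 2 = (∑ i, (max (b i) δ) ^ 2) / M ^ 2 := by
            rw [Finset.sum_div]; exact Finset.sum_congr rfl fun i _ => h1 i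
        _ ≤ (∑ i, (b i ^ 2 + δ ^ 2)) / M ^ 2 := by
            apply div_le_div_of_nonneg_right _ (by positivity)
            · exact Finset.sum_le_sum fun i _ => h2 i
        _ = (∑ i, b i ^ 2 + n * δ ^ 2) / M ^ 2 := by
            rw [Finset.sum_add_distrib, Finset.sum_const, Finset.card_univ, Fintype.card_fin,
              nsmul_eq_mul]
        _ ≤ 1 := by
            rw [div_le_one (by positivity), hM]
            nlinarith [hS0, hε.le]
    refine le_trans (ciInf_le ?_ ⟨α, hαball, fun i => (hαpos i).ne'⟩) ?_
    · refine ⟨0, ?_⟩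
      rintro _ ⟨γ, rfl⟩
      exact Real.iSup_nonneg fun k => Real.iSup_nonneg fun i =>
        div_nonneg (abs_nonneg _) (abs_nonneg _)
    · refine Real.iSup_le (fun k => Real.iSup_le (fun i => ?_) (by positivity)) (by positivity)
      show |∫ t in Set.Icc (0 : ℝ) ((1 : ℝ) / 2 ^ k), x i t| / |α i| ≤ M
      rw [abs_of_pos (hαpos i), div_le_iff₀ (hαpos i)]
      have hXM : M * ((max (b i) δ) / M) = max (b i) δ := by field_simp
      calc |∫ t in Set.Icc (0 : ℝ) ((1 : ℝ) / 2 ^ k), x i t| ≤ max (b i) δ :=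
            le_trans (hkey k i) (le_max_left _ _)
        _ = M * ((max (b i) δ) / M) := hXM.symm
        _ = M * α i := by rw [hα]
  -- conclude
  refine le_trans ?_ hSle
  by_contra h
  push_neg at h
  rcases exists_between h with ⟨c, hc1, hc2⟩
  have := hLHS (c - S) (by linarith)
  linarith


end
end
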